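/- arXiv:1804.09609 — 9 statements merged into one kernel-verified Lean document; each statement's English description precedes it below -/
import Mathlib

section
/- Let 𝒞 be a cone of formal languages and let G be a finitely generated group whose word problem WP(G), with respect to some choice of generators, belongs to 𝒞. Then for every finitely generated subgroup H ≤ G, the word problem WP(H) with respect to any choice of generators of H belongs to 𝒞. -/
/-- A *cone* (full trio): a class of languages over finite alphabets containing
a nonempty language and closed under monoid-homomorphism images, preimages and
intersection with regular languages. -/
structure LanguageCone where
  mem : ∀ (α : Type) [Fintype α], Language α → Prop
  exists_nonempty : ∃ (α : Type) (_ : Fintype α) (L : Language α),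
      mem α L ∧ Set.Nonempty (L : Set (List α))
  image_mem : ∀ (α β : Type) [Fintype α] [Fintype β]
      (f : FreeMonoid α →* FreeMonoid β) (L : Language α),
      mem α L → mem β ((f '' (L : Set (FreeMonoid α)) : Set (FreeMonoid β)) : Language β)
  preimage_mem : ∀ (α β : Type) [Fintype α] [Fintype β]
      (f : FreeMonoid α →* FreeMonoid β) (L : Language β),
      mem β L → mem α ((f ⁻¹' (L : Set (FreeMonoid β)) : Set (FreeMonoid α)) : Language α)
  inter_regular_mem : ∀ (α : Type) [Fintype α] (L R : Language α),
      mem α L → R.IsRegular →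
      mem α (((L : Set (List α)) ∩ (R : Set (List α)) : Set (List α)) : Language α)

/-- A choice of generators for a group `G`: a surjective monoid homomorphism
from a free monoid on a finite symmetric alphabet, compatible with inversion. -/
structure GeneratorChoice (α : Type) (G : Type*) [Fintype α] [Group G] where
  π : FreeMonoid α →* G
  surjective : Function.Surjective π
  inv : α → α
  inv_involutive : Function.Involutive inv
  inv_fixedPointFree : ∀ a, inv a ≠ a
  π_inv : ∀ a, π (FreeMonoid.of (inv a)) = (π (FreeMonoid.of a))⁻¹

/-- The word problem of `G` with respect to a choice of generators. -/
def wordProblem {α : Type} {G : Type*} [Fintype α] [Group G]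
    (c : GeneratorChoice α G) : Language α :=
  {w : FreeMonoid α | c.π w = 1}

/-- If the word problem of `G` lies in a cone `𝒞`, then so does
the word problem of every finitely generated subgroup of `G`. -/
theorem wordProblem_subgroup_mem_cone
    (𝒞 : LanguageCone) (G : Type) [Group G] (hfg : Group.FG G)
    (α : Type) [Fintype α] (c : GeneratorChoice α G)
    (h : 𝒞.mem α (wordProblem c))
    (H : Subgroup G) (hH : Group.FG H)
    (β : Type) [Fintype β] (d : GeneratorChoice β H) :
    𝒞.mem β (wordProblem d) := by
  -- lift each generator of β to a word over α representing the same element of G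
  let f : FreeMonoid β →* FreeMonoid α :=
    FreeMonoid.lift fun b => Classical.choose (c.surjective ((d.π (FreeMonoid.of b) : H) : G))
  have hf : ∀ w : FreeMonoid β, c.π (f w) = ((d.π w : H) : G) := by
    have : (c.π.comp f) = (H.subtype.comp d.π) := by
      apply FreeMonoid.hom_eq
      intro b
      simpa [f] using Classical.choose_spec (c.surjective ((d.π (FreeMonoid.of b) : H) : G))
    intro w
    exact DFunLike.congr_fun this w
  have key : wordProblem d =
      ((f ⁻¹' ((wordProblem c : Language α) : Set (FreeMonoid α)) :
        Set (FreeMonoid β)) : Language β) := by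
    ext w
    constructor
    · intro hw
      have : (d.π w : H) = 1 := hw
      show c.π (f w) = 1
      rw [hf w]; simp [this]
    · intro hw
      have h1 : c.π (f w) = 1 := hw
      rw [hf w] at h1
      show d.π w = 1
      exact Subtype.ext (by simpa using h1)
  rw [key]
  exact 𝒞.preimage_mem β α f (wordProblem c) h
end

section
/- Let 𝒞 be a cone of formal languages and let G be a finitely generated group whose word problem WP(G), with respect to some choice of generators, belongs to 𝒞. If K is a finitely generated group containing G as a subgroup of finite index, then the word problem WP(K) with respect to any choice of generators of K belongs to 𝒞. -/
open FreeMonoid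

section Aux

variable {K : Type} [Group K] (G : Subgroup K)

private def cosR (k : K) : Quotient (QuotientGroup.rightRel G) := Quotient.mk'' k

private lemma cosR_eq_iff {k k' : K} : cosR G k = cosR G k' ↔ k' * k⁻¹ ∈ G := by
  rw [cosR, cosR, Quotient.eq'']
  exact QuotientGroup.rightRel_apply

private lemma cosR_mul_right {k k' : K} (h : cosR G k = cosR G k') (x : K) :
    cosR G (k * x) = cosR G (k' * x) := by
  rw [cosR_eq_iff] at h ⊢
  simpa [mul_inv_rev, mul_assoc] using h

open Classical in
private noncomputable def repR (q : Quotient (QuotientGroup.rightRel G)) : K :=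
  if q = cosR G 1 then 1 else Quotient.out q

open Classical in
private lemma cosR_repR (q : Quotient (QuotientGroup.rightRel G)) : cosR G (repR G q) = q := by
  rw [repR]
  split
  · next h => rw [h]
  · exact Quotient.out_eq' q

open Classical in
private lemma repR_one : repR G (cosR G 1) = 1 := by rw [repR]; simp

variable {β : Type} [Fintype β] (d : GeneratorChoice β K)

private noncomputable def stepR (q : Quotient (QuotientGroup.rightRel G)) (b : β) :
    Quotient (QuotientGroup.rightRel G) :=
  cosR G (repR G q * d.π (of b))

private lemma cosR_mul_of (k : K) (b : β) :
    cosR G (k * d.π (of b)) = stepR G d (cosR G k) b :=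
  cosR_mul_right G (cosR_repR G (cosR G k)).symm _

private lemma emit_mem (q : Quotient (QuotientGroup.rightRel G)) (b : β) :
    repR G q * d.π (of b) * (repR G (stepR G d q b))⁻¹ ∈ G := by
  have h : cosR G (repR G (stepR G d q b)) = cosR G (repR G q * d.π (of b)) :=
    cosR_repR G (stepR G d q b)
  rw [cosR_eq_iff] at h
  exact h

private noncomputable def emit (q : Quotient (QuotientGroup.rightRel G)) (b : β) : G :=
  ⟨_, emit_mem G d q b⟩

private lemma emit_spec (q : Quotient (QuotientGroup.rightRel G)) (b : β) :
    (emit G d q b : K) * repR G (stepR G d q b) = repR G q * d.π (of b) := by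
  simp [emit, mul_assoc]

variable {α : Type} [Fintype α] (c : GeneratorChoice α G)

private noncomputable def gw (q : Quotient (QuotientGroup.rightRel G)) (b : β) : FreeMonoid α :=
  (c.surjective (emit G d q b)).choose

private lemma gw_spec (q : Quotient (QuotientGroup.rightRel G)) (b : β) :
    c.π (gw G d c q b) = emit G d q b :=
  (c.surjective (emit G d q b)).choose_spec

private noncomputable def gh :
    FreeMonoid (Quotient (QuotientGroup.rightRel G) × β) →* FreeMonoid α :=
  FreeMonoid.lift fun p => gw G d c p.1 p.2

private def hh : FreeMonoid (Quotient (QuotientGroup.rightRel G) × β) →* FreeMonoid β :=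
  FreeMonoid.lift fun p => of p.2

open Classical in
private noncomputable def auxM :
    DFA (Quotient (QuotientGroup.rightRel G) × β) (Option (Quotient (QuotientGroup.rightRel G))) where
  step := fun s p => s.bind fun q => if q = p.1 then some (stepR G d p.1 p.2) else none
  start := some (cosR G 1)
  accept := {some (cosR G 1)}

private lemma evalFrom_cons {σ τ : Type*} (M : DFA σ τ) (s : τ) (a : σ) (l : List σ) :
    M.evalFrom s (a :: l) = M.evalFrom (M.step s a) l := rfl

private lemma evalFrom_none (l : List (Quotient (QuotientGroup.rightRel G) × β)) :
    (auxM G d).evalFrom none l = none := by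
  induction l with
  | nil => rfl
  | cons p l ih => rw [evalFrom_cons]; exact ih

private lemma run_spec (l : List (Quotient (QuotientGroup.rightRel G) × β)) :
    ∀ q q', (auxM G d).evalFrom (some q) l = some q' →
      repR G q * d.π (ofList (l.map Prod.snd)) =
        (c.π (gh G d c (ofList l)) : K) * repR G q' := by
  induction l with
  | nil =>
    intro q q' h
    have : q = q' := by simpa [DFA.evalFrom] using h
    subst this
    simp [gh]
  | cons p l ih =>
    intro q q' h
    rw [evalFrom_cons] at h
    by_cases hq : q = p.1
    · subst hq
      have hstep : (auxM G d).step (some p.1) p = some (stepR G d p.1 p.2) := by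
        simp [auxM]
      rw [hstep] at h
      have ihh := ih (stepR G d p.1 p.2) q' h
      rw [List.map_cons, ofList_cons, ofList_cons, map_mul, map_mul]
      calc repR G p.1 * (d.π (of p.2) * d.π (ofList (l.map Prod.snd)))
          = (repR G p.1 * d.π (of p.2)) * d.π (ofList (l.map Prod.snd)) := by
            rw [mul_assoc]
        _ = ((emit G d p.1 p.2 : K) * repR G (stepR G d p.1 p.2)) *
              d.π (ofList (l.map Prod.snd)) := by rw [emit_spec]
        _ = (emit G d p.1 p.2 : K) *
              (repR G (stepR G d p.1 p.2) * d.π (ofList (l.map Prod.snd))) := by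
            rw [mul_assoc]
        _ = (emit G d p.1 p.2 : K) * ((c.π (gh G d c (ofList l)) : K) * repR G q') := by
            rw [ihh]
        _ = (c.π (gh G d c (of p) * gh G d c (ofList l)) : K) * repR G q' := by
            have e : c.π (gh G d c (of p) * gh G d c (ofList l)) =
                emit G d p.1 p.2 * c.π (gh G d c (ofList l)) := by
              rw [map_mul,
                show gh G d c (of p) = gw G d c p.1 p.2 from rfl, gw_spec]
            rw [e]
            push_cast
            rw [mul_assoc]
    · have hstep : (auxM G d).step (some q) p = none := by
        simp [auxM, hq]
      rw [hstep, evalFrom_none] at h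
      exact absurd h (by simp)

private noncomputable def ann (q : Quotient (QuotientGroup.rightRel G)) :
    List β → List (Quotient (QuotientGroup.rightRel G) × β)
  | [] => []
  | b :: v => (q, b) :: ann (stepR G d q b) v

private lemma ann_snd (v : List β) :
    ∀ q, (ann G d q v).map Prod.snd = v := by
  induction v with
  | nil => intro q; rfl
  | cons b v ih => intro q; simp [ann, ih]

private lemma eval_ann (v : List β) : ∀ k : K,
    (auxM G d).evalFrom (some (cosR G k)) (ann G d (cosR G k) v) =
      some (cosR G (k * d.π (ofList v))) := by
  induction v with
  | nil => intro k; simp [ann, DFA.evalFrom, ofList_nil]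
  | cons b v ih =>
    intro k
    rw [ann, evalFrom_cons]
    have hstep : (auxM G d).step (some (cosR G k)) (cosR G k, b) =
        some (stepR G d (cosR G k) b) := by simp [auxM]
    rw [hstep, ← cosR_mul_of]
    rw [ih (k * d.π (of b))]
    rw [ofList_cons, map_mul, mul_assoc]

end Aux

/-- If the word problem of `G` lies in a cone `𝒞` and `G` is a
finite-index subgroup of a finitely generated group `K`, then the word problem
of `K` lies in `𝒞`. -/
theorem wordProblem_finiteIndex_supergroup_mem_cone
    (𝒞 : LanguageCone) (K : Type) [Group K] (hK : Group.FG K)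
    (G : Subgroup K) (hfi : G.FiniteIndex) (hGfg : Group.FG G)
    (α : Type) [Fintype α] (c : GeneratorChoice α G)
    (h : 𝒞.mem α (wordProblem c))
    (β : Type) [Fintype β] (d : GeneratorChoice β K) :
    𝒞.mem β (wordProblem d) := by
  haveI := hfi
  haveI : Finite (K ⧸ G) := Subgroup.finite_quotient_of_finiteIndex
  haveI : Finite (Quotient (QuotientGroup.rightRel G)) :=
    Finite.of_equiv _ (QuotientGroup.quotientRightRelEquivQuotientLeftRel G).symm
  haveI : Fintype (Quotient (QuotientGroup.rightRel G)) := Fintype.ofFinite _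
  have h1 := 𝒞.preimage_mem _ _ (gh G d c) (wordProblem c) h
  have h2 := 𝒞.inter_regular_mem _ _ ((auxM G d).accepts) h1
    ⟨_, inferInstance, auxM G d, rfl⟩
  have h3 := 𝒞.image_mem _ _ (hh (G := G) (β := β)) _ h2
  have key : (wordProblem d : Set (FreeMonoid β)) =
      (hh (G := G) (β := β)) ''
        (((gh G d c ⁻¹' (wordProblem c : Set (FreeMonoid α))) : Set (FreeMonoid _)) ∩
          ((auxM G d).accepts : Set (List _))) := by
    ext v
    constructor
    · intro hv
      have hv1 : d.π v = 1 := hv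
      refine ⟨ofList (ann G d (cosR G 1) (toList v)), ⟨?_, ?_⟩, ?_⟩
      · -- gh image in wordProblem c
        have heval := eval_ann G d (toList v) 1
        change _ = some (cosR G (1 * d.π v)) at heval
        rw [hv1, mul_one] at heval
        have hrun := run_spec G d c (ann G d (cosR G 1) (toList v)) (cosR G 1) (cosR G 1) heval
        rw [ann_snd, repR_one, one_mul] at hrun; change d.π v = _ at hrun; rw [hv1] at hrun
        rw [mul_one] at hrun
        have : (c.π (gh G d c (ofList (ann G d (cosR G 1) (toList v)))) : K) = 1 := hrun.symm
        have hcp : c.π (gh G d c (ofList (ann G d (cosR G 1) (toList v)))) = 1 := by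
          exact_mod_cast this
        exact hcp
      · -- accepted
        have heval := eval_ann G d (toList v) 1
        change _ = some (cosR G (1 * d.π v)) at heval
        rw [hv1, mul_one] at heval
        show (auxM G d).evalFrom (auxM G d).start
            (ann G d (cosR G 1) (toList v)) ∈ (auxM G d).accept
        rw [show (auxM G d).start = some (cosR G 1) from rfl, heval]
        rfl
      · -- hh of ann is v
        show hh (G := G) (ofList (ann G d (cosR G 1) (toList v))) = v
        have : ∀ (l : List (Quotient (QuotientGroup.rightRel G) × β)),
            hh (G := G) (ofList l) = ofList (l.map Prod.snd) := by
          intro l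
          induction l with
          | nil => rfl
          | cons p l ih => rw [ofList_cons, map_mul, List.map_cons, ofList_cons, ih]; rfl
        rw [this, ann_snd]; rfl
    · rintro ⟨w, ⟨hg, hacc⟩, hw⟩
      have hacc' : (auxM G d).evalFrom (some (cosR G 1)) (toList w) = some (cosR G 1) := by
        have := hacc
        change (auxM G d).evalFrom (auxM G d).start (toList w) ∈ (auxM G d).accept at this
        exact this
      have hrun := run_spec G d c (toList w) (cosR G 1) (cosR G 1) hacc'
      rw [repR_one, one_mul, mul_one] at hrun
      have hg1 : c.π (gh G d c (ofList (toList w))) = 1 := by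
        rw [ofList_toList]; exact hg
      rw [hg1] at hrun
      have hhw : ofList ((toList w).map Prod.snd) = v := by
        rw [← hw]
        have : ∀ (l : List (Quotient (QuotientGroup.rightRel G) × β)),
            hh (G := G) (ofList l) = ofList (l.map Prod.snd) := by
          intro l
          induction l with
          | nil => rfl
          | cons p l ih => rw [ofList_cons, map_mul, List.map_cons, ofList_cons, ih]; rfl
        rw [← this, ofList_toList]
      show d.π v = 1
      rw [← hhw]
      simpa using hrun
  rw [show (wordProblem d) = ((hh (G := G) (β := β)) ''
        (((gh G d c ⁻¹' (wordProblem c : Set (FreeMonoid α))) : Set (FreeMonoid _)) ∩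
          ((auxM G d).accepts : Set (List _))) : Language β) from key]
  exact h3
end

section
/- The set S = {(m, m·n) : m, n ∈ ℕ} ⊆ ℕ² is not semilinear. -/
/-- A subset of a commutative monoid is *linear* if it is a translate of a
finitely generated submonoid. -/
def IsLinearSet' {M : Type*} [AddCommMonoid M] (S : Set M) : Prop :=
  ∃ (v₀ : M) (F : Finset M),
    S = (fun v => v₀ + v) '' (AddSubmonoid.closure (F : Set M) : Set M)

/-- A subset is *semilinear* if it is a finite union of linear sets. -/
def IsSemilinearSet' {M : Type*} [AddCommMonoid M] (S : Set M) : Prop :=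
  ∃ (n : ℕ) (f : Fin n → Set M), (∀ i, IsLinearSet' (f i)) ∧ S = ⋃ i, f i

/-- If `a + k*w₁` divides `b + k*w₂` for all `k`, and `w₁ > 0`, then the
"cross product" vanishes: `w₁ * b = w₂ * a`. -/
lemma cross_eq_of_forall_dvd (a b w₁ w₂ : ℕ) (hw : 0 < w₁)
    (h : ∀ k : ℕ, (a + k * w₁) ∣ (b + k * w₂)) : w₁ * b = w₂ * a := by
  set k : ℕ := w₁ * b + w₂ * a + 1 with hk
  have hdvd : (a + k * w₁ : ℤ) ∣ (w₁ * b - w₂ * a : ℤ) := by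
    have h1 : (a + k * w₁ : ℤ) ∣ (w₁ : ℤ) * (b + k * w₂ : ℤ) := by
      exact Dvd.dvd.mul_left (by exact_mod_cast h k) _
    have h2 : (a + k * w₁ : ℤ) ∣ (w₂ : ℤ) * (a + k * w₁ : ℤ) := Dvd.intro_left _ rfl
    have := h1.sub h2
    have heq : (w₁ : ℤ) * (b + k * w₂) - (w₂ : ℤ) * (a + k * w₁)
        = (w₁ : ℤ) * b - (w₂ : ℤ) * a := by ring
    rwa [heq] at this
  have habs : |(w₁ : ℤ) * b - (w₂ : ℤ) * a| < (a + k * w₁ : ℤ) := by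
    have hk1 : (k : ℤ) ≤ (a : ℤ) + k * w₁ := by
      have : (k : ℤ) * 1 ≤ (k : ℤ) * w₁ := by
        apply mul_le_mul_of_nonneg_left (by exact_mod_cast hw) (by positivity)
      nlinarith
    have : |(w₁ : ℤ) * b - (w₂ : ℤ) * a| ≤ (w₁ : ℤ) * b + (w₂ : ℤ) * a := by
      rw [abs_sub_le_iff]
      constructor <;> nlinarith [mul_nonneg (by positivity : (0:ℤ) ≤ (w₁:ℤ)) (by positivity : (0:ℤ) ≤ (b:ℤ)), mul_nonneg (by positivity : (0:ℤ) ≤ (w₂:ℤ)) (by positivity : (0:ℤ) ≤ (a:ℤ))]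
    have hkz : (k : ℤ) = (w₁ : ℤ) * b + (w₂ : ℤ) * a + 1 := by
      rw [hk]; push_cast; ring
    linarith
  have hz : (w₁ : ℤ) * b - (w₂ : ℤ) * a = 0 :=
    Int.eq_zero_of_abs_lt_dvd hdvd habs
  have : (w₁ : ℤ) * b = (w₂ : ℤ) * a := by linarith
  exact_mod_cast this

/-- The set `{(m, m·n) : m, n ∈ ℕ} ⊆ ℕ²` is not semilinear. -/
theorem not_isSemilinearSet_graph_mul :
    ¬ IsSemilinearSet' {p : ℕ × ℕ | ∃ m n : ℕ, p = (m, m * n)} := by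
  rintro ⟨n, f, hlin, hS⟩
  set S : Set (ℕ × ℕ) := {p : ℕ × ℕ | ∃ m n : ℕ, p = (m, m * n)} with hSdef
  -- every point (m, m*m) is in S, hence in some f i
  have hmem : ∀ m : ℕ, ∃ i : Fin n, (m, m * m) ∈ f i := by
    intro m
    have : (m, m * m) ∈ S := ⟨m, m, rfl⟩
    rw [hS] at this
    exact Set.mem_iUnion.mp this
  choose g hg using hmem
  -- n > 0 since there exists a point
  have hn : 0 < n := (g 0).pos
  -- infinite fiber
  obtain ⟨i, hi'⟩ := Finite.exists_infinite_fiber g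
  have hi : (g ⁻¹' {i}).Infinite := Set.infinite_coe_iff.mp hi'
  -- unpack linearity of f i
  obtain ⟨v₀, F, hF⟩ := hlin i
  -- pick m₁ < m₂ < m₃ in the fiber, with m₁ > v₀.1 and m₁ ≥ 1
  obtain ⟨m₁, hm₁A, hm₁⟩ := hi.exists_gt (v₀.1 + 1)
  obtain ⟨m₂, hm₂A, hm₂⟩ := hi.exists_gt m₁
  obtain ⟨m₃, hm₃A, hm₃⟩ := hi.exists_gt m₂
  have hgi : ∀ {m : ℕ}, m ∈ g ⁻¹' {i} → (m, m * m) ∈ f i := by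
    intro m hm
    have : g m = i := hm
    rw [← this]; exact hg m
  -- membership data
  have h1 := hgi hm₁A
  have h2 := hgi hm₂A
  have h3 := hgi hm₃A
  rw [hF] at h1 h2 h3
  obtain ⟨u₁, hu₁, hu₁e⟩ := h1
  obtain ⟨u₂, hu₂, hu₂e⟩ := h2
  obtain ⟨u₃, hu₃, hu₃e⟩ := h3
  -- u₃ has positive first coordinate
  have hv1 : v₀.1 + u₃.1 = m₃ := congrArg Prod.fst hu₃e
  have hu₃1pos : 0 < u₃.1 := by omega
  -- f i ⊆ S
  have hsub : f i ⊆ S := by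
    rw [hS]; exact Set.subset_iUnion f i
  -- key: for j ∈ {1,2}, for all k, (m_j + k*u₃.1) ∣ (m_j*m_j + k*u₃.2)
  have key : ∀ (m : ℕ) (u : ℕ × ℕ), u ∈ AddSubmonoid.closure (F : Set (ℕ × ℕ)) →
      v₀ + u = (m, m * m) → u₃.1 * (m * m) = u₃.2 * m := by
    intro m u hu hue
    apply cross_eq_of_forall_dvd _ _ _ _ hu₃1pos
    intro k
    have hmemk : v₀ + (u + k • u₃) ∈ f i := by
      rw [hF]
      exact ⟨u + k • u₃, add_mem hu (AddSubmonoid.nsmul_mem _ hu₃ k), rfl⟩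
    have hkS := hsub hmemk
    obtain ⟨a, b, hab⟩ := hkS
    have heq : v₀ + (u + k • u₃) = (m + k * u₃.1, m * m + k * u₃.2) := by
      rw [← add_assoc, hue]
      ext
      · simp [Prod.fst_add, smul_eq_mul, mul_comm]
      · simp [Prod.snd_add, smul_eq_mul, mul_comm]
    rw [heq] at hab
    have h1 : m + k * u₃.1 = a := congrArg Prod.fst hab
    have h2 : m * m + k * u₃.2 = a * b := congrArg Prod.snd hab
    exact ⟨b, by rw [h2, h1]⟩
  have e1 := key m₁ u₁ hu₁ hu₁e
  have e2 := key m₂ u₂ hu₂ hu₂e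
  -- derive contradiction: u₃.1 * m₁² = u₃.2 * m₁, u₃.1 * m₂² = u₃.2 * m₂,
  -- with 0 < m₁ < m₂ and u₃.1 > 0 forces m₁ = m₂.
  have hm₁pos : 0 < m₁ := by omega
  nlinarith [mul_pos hu₃1pos hm₁pos, mul_pos hm₁pos (lt_trans hm₁pos hm₂),
    mul_le_mul_of_nonneg_left (le_of_lt hm₂) (Nat.zero_le (u₃.1 * m₁))]
end

section
/- Let BS(1,2) be the Baumslag–Solitar group presented as ⟨a, t | t·a·t⁻¹·a⁻²⟩. Then for all natural numbers m, k, l, the element t^m · a · t^{-k} · a^{-l} equals the identity in BS(1,2) if and only if m = k and l = 2^m. -/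
/-- The single relator `t·a·t⁻¹·a⁻²` of the Baumslag–Solitar group `BS(1,2)`,
where `a = FreeGroup.of 0` and `t = FreeGroup.of 1`. -/
def bsRelators : Set (FreeGroup (Fin 2)) :=
  {FreeGroup.of 1 * FreeGroup.of 0 * (FreeGroup.of 1)⁻¹ *
    ((FreeGroup.of 0)⁻¹ * (FreeGroup.of 0)⁻¹)}

/-- The Baumslag–Solitar group `BS(1,2) = ⟨a, t | t·a·t⁻¹·a⁻²⟩`. -/
abbrev BS12 : Type := PresentedGroup bsRelators

namespace BS12Aux

/-- t-exponent-sum homomorphism target map. -/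
def f₁ : Fin 2 → Multiplicative ℤ := ![1, Multiplicative.ofAdd 1]

lemma hf₁ : ∀ r ∈ bsRelators, (FreeGroup.lift f₁) r = 1 := by
  intro r hr
  simp only [bsRelators, Set.mem_singleton_iff] at hr
  subst hr
  simp [f₁]

noncomputable def ψ : BS12 →* Multiplicative ℤ := PresentedGroup.toGroup hf₁

noncomputable def T : Equiv.Perm ℚ := Equiv.mulLeft₀ 2 two_ne_zero
noncomputable def A : Equiv.Perm ℚ := Equiv.addRight 1

lemma T_apply (x : ℚ) : T x = 2 * x := by simp [T, Equiv.mulLeft₀]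
lemma A_apply (x : ℚ) : A x = x + 1 := by simp [A]

lemma T_inv_apply (x : ℚ) : T⁻¹ x = x / 2 := by
  have h : T (x / 2) = x := by rw [T_apply]; ring
  conv_lhs => rw [← h]
  exact Equiv.symm_apply_apply _ _

lemma A_inv_apply (x : ℚ) : A⁻¹ x = x - 1 := by
  have h : A (x - 1) = x := by rw [A_apply]; ring
  conv_lhs => rw [← h]
  exact Equiv.symm_apply_apply _ _

/-- affine action map: a ↦ (· + 1), t ↦ (2 * ·). -/
noncomputable def f₂ : Fin 2 → Equiv.Perm ℚ := ![A, T]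

lemma hf₂ : ∀ r ∈ bsRelators, (FreeGroup.lift f₂) r = 1 := by
  intro r hr
  simp only [bsRelators, Set.mem_singleton_iff] at hr
  subst hr
  have key : T * A = A * A * T := by
    ext x
    simp only [Equiv.Perm.mul_apply, T_apply, A_apply]
    ring
  simp only [map_mul, map_inv, FreeGroup.lift_apply_of, f₂, Matrix.cons_val_zero,
    Matrix.cons_val_one, Matrix.head_cons]
  rw [key]
  group

noncomputable def φ : BS12 →* Equiv.Perm ℚ := PresentedGroup.toGroup hf₂

lemma A_inv_pow (l : ℕ) : ∀ x : ℚ, ((A⁻¹) ^ l) x = x - l := by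
  induction l with
  | zero => intro x; simp
  | succ n ih =>
      intro x
      rw [pow_succ, Equiv.Perm.mul_apply, ih, A_inv_apply]
      push_cast
      ring

lemma T_inv_pow (k : ℕ) : ∀ x : ℚ, ((T⁻¹) ^ k) x = x / 2 ^ k := by
  induction k with
  | zero => intro x; simp
  | succ n ih =>
      intro x
      rw [pow_succ, Equiv.Perm.mul_apply, ih, T_inv_apply]
      rw [pow_succ]
      ring

lemma T_pow (m : ℕ) : ∀ x : ℚ, (T ^ m) x = 2 ^ m * x := by
  induction m with
  | zero => intro x; simp
  | succ n ih =>
      intro x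
      rw [pow_succ, Equiv.Perm.mul_apply, ih, T_apply, pow_succ]
      ring

/-- The defining relation in `BS12`. -/
lemma rel : (PresentedGroup.of 1 : BS12) * PresentedGroup.of 0 * (PresentedGroup.of 1)⁻¹
    = (PresentedGroup.of 0) ^ 2 := by
  have h2 : (PresentedGroup.of 1 : BS12) * PresentedGroup.of 0 * (PresentedGroup.of 1)⁻¹ *
      ((PresentedGroup.of 0)⁻¹ * (PresentedGroup.of 0)⁻¹) = 1 := by
    show ((QuotientGroup.mk (FreeGroup.of 1 * FreeGroup.of 0 * (FreeGroup.of 1)⁻¹ *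
      ((FreeGroup.of 0)⁻¹ * (FreeGroup.of 0)⁻¹)) : BS12) = 1)
    rw [QuotientGroup.eq_one_iff]
    exact Subgroup.subset_normalClosure (by simp [bsRelators])
  have h3 := mul_eq_one_iff_eq_inv.mp h2
  rw [h3]
  group

lemma conj_pow_eq (m : ℕ) :
    (PresentedGroup.of 1 : BS12) ^ m * PresentedGroup.of 0 * ((PresentedGroup.of 1) ^ m)⁻¹
    = (PresentedGroup.of 0) ^ (2 ^ m) := by
  induction m with
  | zero => simp
  | succ n ih =>
      have step : (PresentedGroup.of 1 : BS12) ^ (n+1) * PresentedGroup.of 0 *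
          ((PresentedGroup.of 1) ^ (n+1))⁻¹
          = PresentedGroup.of 1 * ((PresentedGroup.of 1 : BS12) ^ n * PresentedGroup.of 0 *
            ((PresentedGroup.of 1) ^ n)⁻¹) * (PresentedGroup.of 1)⁻¹ := by
        group
      rw [step, ih, ← conj_pow, rel, ← pow_mul]
      congr 1
      rw [pow_succ]
      ring

end BS12Aux

open BS12Aux in
/-- In `BS(1,2)`, the element `tᵐ·a·t⁻ᵏ·a⁻ˡ` is trivial if and
only if `m = k` and `l = 2ᵐ`. -/
theorem bs12_word_eq_one_iff (m k l : ℕ) :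
    (PresentedGroup.of 1 : BS12) ^ m * PresentedGroup.of 0 *
      ((PresentedGroup.of 1 : BS12)⁻¹) ^ k * ((PresentedGroup.of 0 : BS12)⁻¹) ^ l = 1 ↔
    m = k ∧ l = 2 ^ m := by
  constructor
  · intro h
    -- first: m = k via ψ
    have hψ := congrArg ψ h
    simp only [map_mul, map_pow, map_inv, map_one, ψ, PresentedGroup.toGroup.of, f₁,
      Matrix.cons_val_zero, Matrix.cons_val_one, Matrix.head_cons] at hψ
    have hmk : m = k := by
      have h' := congrArg Multiplicative.toAdd hψ
      simp only [toAdd_mul, toAdd_pow, toAdd_inv, toAdd_ofAdd, toAdd_one, smul_eq_mul] at h'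
      ring_nf at h'
      omega
    subst hmk
    -- second: l = 2^m via φ
    have hφ := congrArg φ h
    simp only [map_mul, map_pow, map_inv, map_one, φ, PresentedGroup.toGroup.of, f₂,
      Matrix.cons_val_zero, Matrix.cons_val_one, Matrix.head_cons] at hφ
    have h0 := congrArg (fun e : Equiv.Perm ℚ => e 0) hφ
    simp only [Equiv.Perm.mul_apply, Equiv.Perm.one_apply] at h0
    rw [A_inv_pow, T_inv_pow, A_apply, T_pow] at h0
    have hl : (l : ℚ) = 2 ^ m := by
      have h2 : (2:ℚ) ^ m ≠ 0 := by positivity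
      field_simp at h0
      linarith
    exact ⟨rfl, by exact_mod_cast hl⟩
  · rintro ⟨rfl, rfl⟩
    rw [inv_pow, inv_pow, conj_pow_eq]
    group
end

section
/- Let S ⊆ ℕ² be a semilinear set such that every (n, m) ∈ S satisfies m ≥ 2^n. Then the set of first coordinates {n : ∃ m, (n, m) ∈ S} is finite. -/
lemma two_mul_le_two_pow (c : ℕ) (hc : 1 ≤ c) : 2 * c ≤ 2 ^ c := by
  induction c with
  | zero => omega
  | succ n ih =>
    rcases Nat.eq_or_lt_of_le hc with h1 | h1
    · simp [← h1]
    · have hn : 1 ≤ n := by omega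
      have h2 : 2 ≤ 2 ^ n := Nat.one_lt_two_pow_iff.mpr (by omega)
      have := ih hn
      rw [pow_succ]
      omega

lemma exp_gap (a b : ℕ) : ∃ k, a + k * b < 2 ^ k := by
  set c := a + b + 1 with hc
  refine ⟨2 * c, ?_⟩
  have h1 : c < 2 ^ c := Nat.lt_two_pow_self
  have h2 : 2 * c ≤ 2 ^ c := two_mul_le_two_pow c (by omega)
  have h3 : 2 ^ (2 * c) = 2 ^ c * 2 ^ c := by rw [two_mul, pow_add]
  rw [h3]
  have ha : a < c := by omega
  have hb : b < c := by omega
  nlinarith [Nat.mul_le_mul h2 (Nat.le_of_lt hb)]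

lemma linear_case (S L : Set (ℕ × ℕ)) (hL : IsLinearSet' L) (hsub : L ⊆ S)
    (h : ∀ p ∈ S, 2 ^ p.1 ≤ p.2) : {n : ℕ | ∃ m : ℕ, (n, m) ∈ L}.Finite := by
  obtain ⟨v₀, F, rfl⟩ := hL
  by_cases hF : ∀ g ∈ F, g.1 = 0
  · -- all generators have first coordinate 0
    apply Set.Finite.subset (Set.finite_singleton v₀.1)
    have key : ∀ x ∈ AddSubmonoid.closure (F : Set (ℕ × ℕ)), x.1 = 0 := by
      intro x hx
      induction hx using AddSubmonoid.closure_induction with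
      | mem g hg => exact hF g (by simpa using hg)
      | zero => rfl
      | add x y _ _ hx hy => simp [Prod.fst_add, hx, hy]
    rintro n ⟨m, x, hx, hxe⟩
    have hx1 : x.1 = 0 := key x hx
    have : n = v₀.1 + x.1 := by
      have := congrArg Prod.fst hxe
      simpa using this.symm
    simp [this, hx1]
  · -- some generator has positive first coordinate: contradiction
    push_neg at hF
    obtain ⟨g, hgF, hg1⟩ := hF
    exfalso
    obtain ⟨k, hk⟩ := exp_gap v₀.2 g.2
    have hmem : v₀ + k • g ∈ S := by
      apply hsub
      exact ⟨k • g, (AddSubmonoid.closure _).nsmul_mem (AddSubmonoid.subset_closure (Finset.mem_coe.mpr hgF)) k, rfl⟩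
    have hh := h _ hmem
    have h1 : (v₀ + k • g).1 = v₀.1 + k * g.1 := by
      simp [Prod.fst_add, smul_eq_mul]
    have h2 : (v₀ + k • g).2 = v₀.2 + k * g.2 := by
      simp [Prod.snd_add, smul_eq_mul]
    rw [h1, h2] at hh
    have hkg : k ≤ v₀.1 + k * g.1 := by
      have : k * 1 ≤ k * g.1 := Nat.mul_le_mul_left k (by omega)
      omega
    have : 2 ^ k ≤ 2 ^ (v₀.1 + k * g.1) := Nat.pow_le_pow_right (by norm_num) hkg
    omega

/-- A semilinear subset of `ℕ²` lying on or above the graph of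
`n ↦ 2ⁿ` has only finitely many first coordinates. -/
theorem finite_first_coords_of_semilinear_above_exponential
    (S : Set (ℕ × ℕ)) (hS : IsSemilinearSet' S)
    (h : ∀ p ∈ S, 2 ^ p.1 ≤ p.2) :
    {n : ℕ | ∃ m : ℕ, (n, m) ∈ S}.Finite := by
  obtain ⟨n, f, hlin, rfl⟩ := hS
  have : {k : ℕ | ∃ m : ℕ, (k, m) ∈ ⋃ i, f i} = ⋃ i, {k : ℕ | ∃ m : ℕ, (k, m) ∈ f i} := by
    ext k
    simp only [Set.mem_setOf_eq, Set.mem_iUnion]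
    tauto
  rw [this]
  apply Set.finite_iUnion
  intro i
  exact linear_case _ _ (hlin i) (Set.subset_iUnion f i) h
end

section
/- In the right-angled Artin group A(P₄) = ⟨a, b, c, d | [a,b], [b,c], [c,d]⟩, let x = a·b⁻¹, y = b·c⁻¹, z = c·d⁻¹, and for i ≥ 1 set uᵢ = x·y^{2i-1}·z⁻¹ and vᵢ = x⁻¹·y^{2i-1}·z. Then for every n ≥ 1: (a·d)^n·(a⁻¹·d⁻¹)^n = u₁·y⁻²·u₂·y⁻⁴·⋯·y^{-(2n-2)}·uₙ·y^{-2n}·vₙ·y^{-(2n-2)}·⋯·y⁻²·v₁. -/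
/- ### Generic auxiliary lemmas about groups with partial commutation -/

section Gen
variable {G : Type*} [Group G] (a b c d : G)

private lemma raag_y_red (hbc : Commute b c) (k : ℤ) :
    (b * c⁻¹) ^ k = b ^ k * c ^ (-k) := by
  rw [hbc.inv_right.mul_zpow, inv_zpow, ← zpow_neg]

private lemma raag_u_red (hbc : Commute b c) (hcd : Commute c d) (k : ℤ) :
    (a * b⁻¹) * (b * c⁻¹) ^ k * (c * d⁻¹)⁻¹ = a * b ^ (k-1) * c ^ (-(k+1)) * d := by
  rw [raag_y_red b c hbc k, mul_inv_rev, inv_inv]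
  have h1 : d * c⁻¹ = c⁻¹ * d := (hcd.inv_left.symm).eq
  have h2 : ∀ g : G, b⁻¹ * (b ^ k * g) = b ^ (k-1) * g := by
    intro g
    have h := (zpow_add b (-1) k).symm
    rw [zpow_neg_one] at h
    rw [← mul_assoc, h]
    congr 2
    ring
  have h3 : ∀ g : G, c ^ (-k) * (c⁻¹ * g) = c ^ (-(k+1)) * g := by
    intro g
    have h := (zpow_add c (-k) (-1)).symm
    rw [zpow_neg_one] at h
    rw [← mul_assoc, h]
    congr 2
    ring
  simp only [mul_assoc, h1, h2, h3]

private lemma raag_v_red (hab : Commute a b) (hbc : Commute b c) (k : ℤ) :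
    (a * b⁻¹)⁻¹ * (b * c⁻¹) ^ k * (c * d⁻¹) = b ^ (k+1) * a⁻¹ * c ^ (-(k-1)) * d⁻¹ := by
  rw [raag_y_red b c hbc k, mul_inv_rev, inv_inv]
  have h1 : ∀ g : G, a⁻¹ * (b ^ k * g) = b ^ k * (a⁻¹ * g) := by
    intro g
    rw [← mul_assoc, ((hab.zpow_right k).inv_left).eq, mul_assoc]
  have h2 : ∀ g : G, b * (b ^ k * g) = b ^ (k+1) * g := by
    intro g
    rw [← mul_assoc, ← zpow_one_add]
    congr 2
    ring
  have h3 : ∀ g : G, c ^ (-k) * (c * g) = c ^ (-(k-1)) * g := by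
    intro g
    rw [← mul_assoc, ← zpow_add_one]
    congr 2
    ring
  simp only [mul_assoc, h1, h2, h3]

private lemma raag_stepA (hab : Commute a b) (hbc : Commute b c) (hcd : Commute c d) (M : ℤ) :
    (a * b ^ M * c ^ (-(M+2)) * d) * (b ^ (-(M+2)) * c ^ (M+2)) * b ^ (M+2)
      = b ^ M * (a * d) := by
  have hcb : ∀ k j : ℤ, c ^ k * b ^ j = b ^ j * c ^ k := fun k j =>
    ((hbc.zpow_zpow j k).eq).symm
  have hba : ∀ (k : ℤ) (g : G), b ^ k * (a * g) = a * (b ^ k * g) := fun k g => by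
    rw [← mul_assoc, ← (hab.zpow_right k).eq, mul_assoc]
  have hdc2 : ∀ k : ℤ, d * c ^ k = c ^ k * d := fun k => ((hcd.zpow_left k).symm).eq
  have hdc : ∀ (k : ℤ) (g : G), d * (c ^ k * g) = c ^ k * (d * g) := fun k g => by
    rw [← mul_assoc, hdc2, mul_assoc]
  have hbb : ∀ (k j : ℤ) (g : G), b ^ k * (b ^ j * g) = b ^ (k+j) * g := fun k j g => by
    rw [← mul_assoc, ← zpow_add]
  have hcc : ∀ (k j : ℤ) (g : G), c ^ k * (c ^ j * g) = c ^ (k+j) * g := fun k j g => by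
    rw [← mul_assoc, ← zpow_add]
  have hcc2 : ∀ k j : ℤ, c ^ k * c ^ j = c ^ (k+j) := fun k j => (zpow_add c k j).symm
  simp only [mul_assoc]
  simp only [hcb, hbb, hdc2, hdc, hcc, hcc2, hba, neg_add_cancel, zpow_zero, one_mul,
    mul_one]

private lemma raag_stepB (hab : Commute a b) (hbc : Commute b c) (hcd : Commute c d) (M : ℤ) :
    b ^ (-(M+2)) * ((b ^ (M+2) * a⁻¹ * c ^ (-M) * d⁻¹) * (b ^ (-M) * c ^ M))
      = (a⁻¹ * d⁻¹) * b ^ (-M) := by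
  have hbc' : ∀ k j : ℤ, b ^ k * c ^ j = c ^ j * b ^ k := fun k j =>
    ((hbc.zpow_zpow k j).eq)
  have hd'c2 : ∀ k : ℤ, d⁻¹ * c ^ k = c ^ k * d⁻¹ := fun k =>
    (((hcd.zpow_left k)).inv_right.symm).eq
  have hd'c : ∀ (k : ℤ) (g : G), d⁻¹ * (c ^ k * g) = c ^ k * (d⁻¹ * g) := fun k g => by
    rw [← mul_assoc, hd'c2, mul_assoc]
  have ha'b2 : ∀ k : ℤ, a⁻¹ * b ^ k = b ^ k * a⁻¹ := fun k =>
    ((hab.zpow_right k).inv_left).eq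
  have ha'b : ∀ (k : ℤ) (g : G), a⁻¹ * (b ^ k * g) = b ^ k * (a⁻¹ * g) := fun k g => by
    rw [← mul_assoc, ha'b2, mul_assoc]
  have hbb : ∀ (k j : ℤ) (g : G), b ^ k * (b ^ j * g) = b ^ (k+j) * g := fun k j g => by
    rw [← mul_assoc, ← zpow_add]
  have hcc : ∀ (k j : ℤ) (g : G), c ^ k * (c ^ j * g) = c ^ (k+j) * g := fun k j g => by
    rw [← mul_assoc, ← zpow_add]
  have hbb2 : ∀ k j : ℤ, b ^ k * b ^ j = b ^ (k+j) := fun k j => (zpow_add b k j).symm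
  simp only [mul_assoc]
  simp only [hbc', hd'c2, hd'c, hbb, hbb2, hcc, neg_add_cancel, add_neg_cancel,
    zpow_zero, one_mul, mul_one]

end Gen

/-- Relators `[a,b], [b,c], [c,d]` (with `[v,w] = v⁻¹w⁻¹vw`) of the right-angled
Artin group of the path `P₄`, on generators `a = 0, b = 1, c = 2, d = 3`. -/
def P4Relators : Set (FreeGroup (Fin 4)) :=
  { (FreeGroup.of 0)⁻¹ * (FreeGroup.of 1)⁻¹ * FreeGroup.of 0 * FreeGroup.of 1,
    (FreeGroup.of 1)⁻¹ * (FreeGroup.of 2)⁻¹ * FreeGroup.of 1 * FreeGroup.of 2,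
    (FreeGroup.of 2)⁻¹ * (FreeGroup.of 3)⁻¹ * FreeGroup.of 2 * FreeGroup.of 3 }

/-- The right-angled Artin group `A(P₄) = ⟨a,b,c,d ∣ [a,b],[b,c],[c,d]⟩`. -/
abbrev AP4 : Type := PresentedGroup P4Relators

/-- The generator `a` of `A(P₄)`. -/
def ap4a : AP4 := PresentedGroup.of 0
/-- The generator `b` of `A(P₄)`. -/
def ap4b : AP4 := PresentedGroup.of 1
/-- The generator `c` of `A(P₄)`. -/
def ap4c : AP4 := PresentedGroup.of 2
/-- The generator `d` of `A(P₄)`. -/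
def ap4d : AP4 := PresentedGroup.of 3

/-- `x = a·b⁻¹`. -/
def ap4x : AP4 := ap4a * ap4b⁻¹
/-- `y = b·c⁻¹`. -/
def ap4y : AP4 := ap4b * ap4c⁻¹
/-- `z = c·d⁻¹`. -/
def ap4z : AP4 := ap4c * ap4d⁻¹

/-- `uᵢ = x·y^(2i-1)·z⁻¹`. -/
def ap4u (i : ℕ) : AP4 := ap4x * ap4y ^ (2 * (i : ℤ) - 1) * ap4z⁻¹
/-- `vᵢ = x⁻¹·y^(2i-1)·z`. -/
def ap4v (i : ℕ) : AP4 := ap4x⁻¹ * ap4y ^ (2 * (i : ℤ) - 1) * ap4z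

section CommLemmas

private lemma ap4_rel_one {r : FreeGroup (Fin 4)} (hr : r ∈ P4Relators) :
    PresentedGroup.mk P4Relators r = 1 :=
  (QuotientGroup.eq_one_iff _).mpr (Subgroup.subset_normalClosure hr)

private lemma ap4_comm_of_rel {s t : AP4} (h : s⁻¹ * t⁻¹ * s * t = 1) : Commute s t := by
  show s * t = t * s
  calc s * t = t * s * (s⁻¹ * t⁻¹ * s * t) := by group
    _ = t * s := by rw [h, mul_one]

private lemma ap4_comm_ab : Commute ap4a ap4b := by
  apply ap4_comm_of_rel
  exact
    ap4_rel_one (r := (FreeGroup.of 0)⁻¹ * (FreeGroup.of 1)⁻¹ * FreeGroup.of 0 * FreeGroup.of 1)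
      (by left; rfl)

private lemma ap4_comm_bc : Commute ap4b ap4c := by
  apply ap4_comm_of_rel
  exact
    ap4_rel_one (r := (FreeGroup.of 1)⁻¹ * (FreeGroup.of 2)⁻¹ * FreeGroup.of 1 * FreeGroup.of 2)
      (by right; left; rfl)

private lemma ap4_comm_cd : Commute ap4c ap4d := by
  apply ap4_comm_of_rel
  exact
    ap4_rel_one (r := (FreeGroup.of 2)⁻¹ * (FreeGroup.of 3)⁻¹ * FreeGroup.of 2 * FreeGroup.of 3)
      (by right; right; rfl)

end CommLemmas

section Reductions

private lemma ap4_y_zpow (k : ℤ) : ap4y ^ k = ap4b ^ k * ap4c ^ (-k) :=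
  raag_y_red _ _ ap4_comm_bc k

private lemma ap4_u_red (i : ℕ) :
    ap4u (i+1) = ap4a * ap4b ^ (2*(i:ℤ)) * ap4c ^ (-(2*(i:ℤ)+2)) * ap4d := by
  have hcast : (2 * ((i:ℕ)+1 : ℕ) - 1 : ℤ) = 2*(i:ℤ)+1 := by push_cast; ring
  rw [ap4u, ap4x, ap4y, ap4z]
  rw [show (2 * (((i+1) : ℕ) : ℤ) - 1) = 2*(i:ℤ)+1 by push_cast; ring]
  rw [raag_u_red ap4a ap4b ap4c ap4d ap4_comm_bc ap4_comm_cd (2*(i:ℤ)+1)]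
  rw [show (2*(i:ℤ)+1-1) = 2*(i:ℤ) by ring, show (-(2*(i:ℤ)+1+1)) = -(2*(i:ℤ)+2) by ring]

private lemma ap4_v_red (i : ℕ) :
    ap4v (i+1) = ap4b ^ (2*(i:ℤ)+2) * ap4a⁻¹ * ap4c ^ (-(2*(i:ℤ))) * ap4d⁻¹ := by
  rw [ap4v, ap4x, ap4y, ap4z]
  rw [show (2 * (((i+1) : ℕ) : ℤ) - 1) = 2*(i:ℤ)+1 by push_cast; ring]
  rw [raag_v_red ap4a ap4b ap4c ap4d ap4_comm_ab ap4_comm_bc (2*(i:ℤ)+1)]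
  rw [show (2*(i:ℤ)+1+1) = 2*(i:ℤ)+2 by ring, show (-(2*(i:ℤ)+1-1)) = -(2*(i:ℤ)) by ring]

end Reductions

section Induction

private lemma ap4_lemA (n : ℕ) :
    (ap4a * ap4d) ^ n =
      (((List.range n).map fun i => ap4u (i + 1) * ap4y ^ (-(2 * ((i : ℤ) + 1)))).prod)
        * ap4b ^ (2*(n:ℤ)) := by
  induction n with
  | zero => simp
  | succ n ih =>
    rw [pow_succ, ih, List.range_succ, List.map_append, List.prod_append]
    simp only [List.map_cons, List.map_nil, List.prod_cons, List.prod_nil, mul_one]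
    rw [mul_assoc, mul_assoc]
    congr 1
    have key := raag_stepA ap4a ap4b ap4c ap4d ap4_comm_ab ap4_comm_bc ap4_comm_cd (2*(n:ℤ))
    rw [← ap4_u_red n] at key
    rw [show (-(2 * ((n:ℤ) + 1))) = (-(2*(n:ℤ)+2)) by ring,
        show (2 * (((n+1) : ℕ) : ℤ)) = (2*(n:ℤ)+2) by push_cast; ring]
    rw [ap4_y_zpow (-(2*(n:ℤ)+2)), neg_neg]
    rw [← key]

private lemma ap4_lemB (n : ℕ) :
    (ap4a⁻¹ * ap4d⁻¹) ^ n =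
      ap4b ^ (-(2*(n:ℤ))) *
      (((List.range n).reverse.map fun i => ap4v (i + 1) * ap4y ^ (-(2 * (i : ℤ)))).prod) := by
  induction n with
  | zero => simp
  | succ n ih =>
    rw [pow_succ', ih, List.range_succ, List.reverse_append, List.map_append, List.prod_append]
    simp only [List.reverse_cons, List.reverse_nil, List.nil_append, List.map_cons,
      List.map_nil, List.prod_cons, List.prod_nil, mul_one]
    rw [← mul_assoc, ← mul_assoc]
    congr 1
    have key := raag_stepB ap4a ap4b ap4c ap4d ap4_comm_ab ap4_comm_bc ap4_comm_cd (2*(n:ℤ))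
    rw [← ap4_v_red n] at key
    rw [show (2 * (((n+1) : ℕ) : ℤ)) = (2*(n:ℤ)+2) by push_cast; ring]
    rw [ap4_y_zpow (-(2*(n:ℤ))), neg_neg]
    rw [← key]

end Induction

/-- In `A(P₄)`, for every `n ≥ 1`,
`(a·d)ⁿ·(a⁻¹·d⁻¹)ⁿ = u₁·y⁻²·u₂·y⁻⁴ ⋯ y^(-(2n-2))·uₙ·y^(-2n)·vₙ·y^(-(2n-2)) ⋯ y⁻²·v₁`. -/
theorem ap4_key_product_identity (n : ℕ) (hn : 1 ≤ n) :
    (ap4a * ap4d) ^ n * (ap4a⁻¹ * ap4d⁻¹) ^ n =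
      (((List.range n).map fun i => ap4u (i + 1) * ap4y ^ (-(2 * ((i : ℤ) + 1)))).prod) *
      (((List.range n).reverse.map fun i => ap4v (i + 1) * ap4y ^ (-(2 * (i : ℤ)))).prod) := by
  rw [ap4_lemA n, ap4_lemB n]
  rw [mul_assoc, ← mul_assoc (ap4b ^ (2*(n:ℤ))), ← zpow_add, add_neg_cancel, zpow_zero, one_mul]
end

section
/- Let F be the free group on three generators x, y, z. For i ≥ 1 set uᵢ = x·y^{2i-1}·z⁻¹ and vᵢ = x⁻¹·y^{2i-1}·z, and for n ≥ 1 let wₙ = u₁·y⁻²·u₂·y⁻⁴·⋯·y^{-(2n-2)}·uₙ·y^{-2n}·vₙ·y^{-(2n-2)}·⋯·y⁻²·v₁ ∈ F. Then every word over the letters x, y, z, x⁻¹, y⁻¹, z⁻¹ (i.e., every list of generators and their inverses) whose product in F equals wₙ contains at least 2n² occurrences of the letter y (counting only positive occurrences of y, not occurrences of y⁻¹). -/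
/-- The free group on three generators `x = 0`, `y = 1`, `z = 2`. -/
abbrev F3 : Type := FreeGroup (Fin 3)

/-- `uᵢ = x·y^(2i-1)·z⁻¹` in the free group on `x, y, z`. -/
def f3u (i : ℕ) : F3 := FreeGroup.of 0 * FreeGroup.of 1 ^ (2 * (i : ℤ) - 1) * (FreeGroup.of 2)⁻¹
/-- `vᵢ = x⁻¹·y^(2i-1)·z` in the free group on `x, y, z`. -/
def f3v (i : ℕ) : F3 := (FreeGroup.of 0)⁻¹ * FreeGroup.of 1 ^ (2 * (i : ℤ) - 1) * FreeGroup.of 2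

/-- `wₙ = u₁·y⁻²·u₂·y⁻⁴ ⋯ y^(-(2n-2))·uₙ·y^(-2n)·vₙ·y^(-(2n-2)) ⋯ y⁻²·v₁`. -/
def f3w (n : ℕ) : F3 :=
  (((List.range n).map fun i => f3u (i + 1) * FreeGroup.of 1 ^ (-(2 * ((i : ℤ) + 1)))).prod) *
  (((List.range n).reverse.map fun i => f3v (i + 1) * FreeGroup.of 1 ^ (-(2 * (i : ℤ)))).prod)

/-- The group element of the free group represented by a word in the generators
and their formal inverses: a letter `(g, true)` stands for the generator `g` and
`(g, false)` for its inverse. -/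
def wordProd (l : List (Fin 3 × Bool)) : F3 :=
  (l.map fun p => cond p.2 (FreeGroup.of p.1) (FreeGroup.of p.1)⁻¹).prod

namespace F3Aux

abbrev Ltr := Fin 3 × Bool

def yT (k : ℕ) : List Ltr := List.replicate k ((1 : Fin 3), true)
def yF (k : ℕ) : List Ltr := List.replicate k ((1 : Fin 3), false)

def block (a : Fin 3) (s : Bool) (c : Fin 3) (t : Bool) (k m : ℕ) : List Ltr :=
  (a, s) :: (yT k ++ (c, t) :: yF m)

def ublock (i : ℕ) : List Ltr := block 0 true 2 false (2 * i + 1) (2 * i + 2)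
def vblock (i : ℕ) : List Ltr := block 0 false 2 true (2 * i + 1) (2 * i)

def blocks (n : ℕ) : List (List Ltr) :=
  (List.range n).map ublock ++ (List.range n).reverse.map vblock

def W (n : ℕ) : List Ltr := (blocks n).flatten

/-! ### mk lemmas -/

lemma mk_singleton_true (a : Fin 3) : FreeGroup.mk [(a, true)] = FreeGroup.of a := rfl

lemma mk_singleton_false (a : Fin 3) : FreeGroup.mk [(a, false)] = (FreeGroup.of a)⁻¹ := by
  rw [← mk_singleton_true, FreeGroup.inv_mk]
  simp [FreeGroup.invRev]

lemma mk_cons (p : Ltr) (l : List Ltr) :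
    FreeGroup.mk (p :: l) = FreeGroup.mk [p] * FreeGroup.mk l := by
  rw [FreeGroup.mul_mk]; rfl

lemma wordProd_eq_mk (l : List Ltr) : wordProd l = FreeGroup.mk l := by
  induction l with
  | nil => simp [wordProd, FreeGroup.one_eq_mk]
  | cons p l ih =>
    rw [wordProd, List.map_cons, List.prod_cons]
    rw [mk_cons]
    rcases p with ⟨a, b⟩
    cases b <;> simp [wordProd, mk_singleton_true, mk_singleton_false] at ih ⊢ <;> rw [ih]

lemma mk_yT (k : ℕ) : FreeGroup.mk (yT k) = (FreeGroup.of (1 : Fin 3) : F3) ^ (k : ℤ) := by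
  induction k with
  | zero => simp [yT, FreeGroup.one_eq_mk]
  | succ k ih =>
    rw [yT, List.replicate_succ, ← yT, mk_cons, ih, mk_singleton_true]
    push_cast
    rw [add_comm, zpow_add, zpow_one]

lemma mk_yF (k : ℕ) : FreeGroup.mk (yF k) = (FreeGroup.of (1 : Fin 3) : F3) ^ (-(k : ℤ)) := by
  induction k with
  | zero => simp [yF, FreeGroup.one_eq_mk]
  | succ k ih =>
    rw [yF, List.replicate_succ, ← yF, mk_cons, ih, mk_singleton_false]
    push_cast
    rw [neg_add, add_comm, zpow_add]
    simp

lemma mk_block (a : Fin 3) (s : Bool) (c : Fin 3) (t : Bool) (k m : ℕ) :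
    FreeGroup.mk (block a s c t k m) =
      FreeGroup.mk [(a, s)] * FreeGroup.of 1 ^ (k : ℤ) * FreeGroup.mk [(c, t)] *
        FreeGroup.of 1 ^ (-(m : ℤ)) := by
  have h : block a s c t k m = [(a, s)] ++ yT k ++ [(c, t)] ++ yF m := by simp [block]
  rw [h, ← FreeGroup.mul_mk, ← FreeGroup.mul_mk, ← FreeGroup.mul_mk, mk_yT, mk_yF]

lemma mk_ublock (i : ℕ) :
    FreeGroup.mk (ublock i) = f3u (i + 1) * FreeGroup.of 1 ^ (-(2 * ((i : ℤ) + 1))) := by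
  rw [ublock, mk_block, mk_singleton_true, mk_singleton_false, f3u]
  have h1 : ((2 * i + 1 : ℕ) : ℤ) = 2 * ((i : ℤ) + 1) - 1 := by push_cast; ring
  have h2 : (-((2 * i + 2 : ℕ) : ℤ)) = -(2 * ((i : ℤ) + 1)) := by push_cast; ring
  rw [h1, h2]
  push_cast
  ring_nf

lemma mk_vblock (i : ℕ) :
    FreeGroup.mk (vblock i) = f3v (i + 1) * FreeGroup.of 1 ^ (-(2 * (i : ℤ))) := by
  rw [vblock, mk_block, mk_singleton_true, mk_singleton_false, f3v]
  have h1 : ((2 * i + 1 : ℕ) : ℤ) = 2 * ((i : ℤ) + 1) - 1 := by push_cast; ring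
  have h2 : (-((2 * i : ℕ) : ℤ)) = -(2 * (i : ℤ)) := by push_cast; ring
  rw [h1, h2]
  push_cast
  ring_nf

lemma mk_flatten (L : List (List Ltr)) :
    FreeGroup.mk L.flatten = (L.map FreeGroup.mk).prod := by
  induction L with
  | nil => simp [FreeGroup.one_eq_mk]
  | cons a L ih => simp [List.flatten_cons, ← FreeGroup.mul_mk, ih]

lemma mk_W (n : ℕ) : FreeGroup.mk (W n) = f3w n := by
  rw [W, mk_flatten, blocks, List.map_append, List.prod_append, f3w]
  congr 1
  · rw [List.map_map]
    exact congrArg List.prod (List.map_congr_left fun i _ => mk_ublock i)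
  · rw [List.map_map]
    exact congrArg List.prod (List.map_congr_left fun i _ => mk_vblock i)

/-! ### counting -/

lemma count_block (a : Fin 3) (s : Bool) (c : Fin 3) (t : Bool) (k m : ℕ)
    (ha : (a, s) ≠ ((1 : Fin 3), true)) (hc : (c, t) ≠ ((1 : Fin 3), true)) :
    (block a s c t k m).count ((1 : Fin 3), true) = k := by
  simp [block, yT, yF, List.count_cons, List.count_append, List.count_replicate, ha, hc]

lemma sum_odds (n : ℕ) : ((List.range n).map fun i => 2 * i + 1).sum = n ^ 2 := by
  induction n with
  | zero => simp
  | succ n ih => rw [List.range_succ, List.map_append, List.sum_append, ih]; simp; ring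

lemma count_W (n : ℕ) : (W n).count ((1 : Fin 3), true) = 2 * n ^ 2 := by
  have key : ∀ L : List (List Ltr),
      L.flatten.count ((1 : Fin 3), true) = (L.map fun l => l.count ((1 : Fin 3), true)).sum := by
    intro L
    induction L with
    | nil => simp
    | cons a L ih => simp [List.flatten_cons, List.count_append, ih]
  rw [W, key, blocks]
  simp only [List.map_append, List.sum_append, List.map_map, List.map_reverse,
    List.sum_reverse, Function.comp_def]
  have hu : (List.range n).map (fun i => (ublock i).count ((1 : Fin 3), true)) =
      (List.range n).map fun i => 2 * i + 1 :=
    List.map_congr_left fun i _ => count_block _ _ _ _ _ _ (by decide) (by decide)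
  have hv : (List.range n).map (fun i => (vblock i).count ((1 : Fin 3), true)) =
      (List.range n).map fun i => 2 * i + 1 :=
    List.map_congr_left fun i _ => count_block _ _ _ _ _ _ (by decide) (by decide)
  rw [hu, hv, sum_odds]
  ring

/-! ### reduction decreases counts -/

lemma step_count {l l' : List Ltr} (h : FreeGroup.Red.Step l l') (c : Ltr) :
    l'.count c ≤ l.count c := by
  cases h with
  | @not L₁ L₂ x b =>
    simp only [List.count_append, List.count_cons]
    omega

lemma red_count {l l' : List Ltr} (h : FreeGroup.Red l l') (c : Ltr) :
    l'.count c ≤ l.count c := by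
  induction h with
  | refl => exact le_refl _
  | tail _ hstep ih => exact le_trans (step_count hstep c) ih

/-! ### W n is reduced -/

def P (a b : Ltr) : Prop := a.1 = b.1 → a.2 = b.2

lemma no_step_of_chain' {l l' : List Ltr} (hc : List.Chain' P l) :
    ¬ FreeGroup.Red.Step l l' := by
  intro h
  cases h with
  | @not L₁ L₂ x b =>
    have hinf : [(x, b), (x, !b)] <:+: L₁ ++ (x, b) :: (x, !b) :: L₂ := ⟨L₁, L₂, by simp⟩
    have h2 := (List.isChain_cons_cons.1 (hc.infix hinf)).1 rfl
    simp at h2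

lemma chain'_cons_yF (p : Ltr) (hp : P p ((1 : Fin 3), false)) (m : ℕ) :
    List.Chain' P (p :: yF m) := by
  induction m generalizing p with
  | zero => simp [yF]; exact List.isChain_singleton _
  | succ m ih =>
    rw [yF, List.replicate_succ, ← yF]
    exact List.isChain_cons_cons.2 ⟨hp, ih _ fun _ => rfl⟩

lemma chain'_yT_append (k : ℕ) {rest : List Ltr} (h : List.Chain' P rest)
    (hh : ∀ q ∈ rest.head?, P ((1 : Fin 3), true) q) : List.Chain' P (yT k ++ rest) := by
  induction k with
  | zero => simpa [yT]
  | succ k ih =>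
    rw [yT, List.replicate_succ, ← yT, List.cons_append]
    refine List.isChain_cons.2 ⟨?_, ih⟩
    intro q hq
    cases k with
    | zero => exact hh q (by simpa [yT] using hq)
    | succ k =>
      rw [yT, List.replicate_succ, List.cons_append, List.head?_cons] at hq
      simp only [Option.mem_def, Option.some.injEq] at hq
      subst hq
      exact fun _ => rfl

lemma chain'_block (a : Fin 3) (s : Bool) (c : Fin 3) (t : Bool) (k m : ℕ)
    (ha : a ≠ 1) (hac : a ≠ c) (hc : c ≠ 1) :
    List.Chain' P (block a s c t k m) := by
  have tail : List.Chain' P ((c, t) :: yF m) :=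
    chain'_cons_yF _ (fun h => absurd h hc) m
  rw [block]
  refine List.isChain_cons.2 ⟨?_, chain'_yT_append k tail ?_⟩
  · intro q hq
    cases k with
    | zero =>
      simp only [yT, List.replicate, List.nil_append, List.head?_cons,
        Option.mem_def, Option.some.injEq] at hq
      subst hq
      exact fun h => absurd h hac
    | succ k =>
      rw [yT, List.replicate_succ, List.cons_append, List.head?_cons] at hq
      simp only [Option.mem_def, Option.some.injEq] at hq
      subst hq
      exact fun h => absurd h ha
  · intro q hq
    simp only [List.head?_cons, Option.mem_def, Option.some.injEq] at hq
    subst hq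
    exact fun h => absurd h.symm hc

lemma head?_block (a : Fin 3) (s : Bool) (c : Fin 3) (t : Bool) (k m : ℕ) :
    (block a s c t k m).head? = some (a, s) := rfl

lemma getLast?_cons_yF (p : Ltr) (m : ℕ) :
    (p :: yF m).getLast? = some (if m = 0 then p else ((1 : Fin 3), false)) := by
  induction m generalizing p with
  | zero => rfl
  | succ m ih =>
    rw [yF, List.replicate_succ, ← yF, List.getLast?_cons_cons, ih]
    simp

lemma getLast?_block (a : Fin 3) (s : Bool) (c : Fin 3) (t : Bool) (k m : ℕ) (hc : c ≠ 0) :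
    ∀ q ∈ (block a s c t k m).getLast?, q.1 ≠ 0 := by
  intro q hq
  rw [block] at hq
  have h1 : ((a, s) :: (yT k ++ (c, t) :: yF m)) = ((a, s) :: yT k) ++ ((c, t) :: yF m) := by
    simp
  rw [h1, List.getLast?_append_of_ne_nil _ (by simp), getLast?_cons_yF] at hq
  simp only [Option.mem_def, Option.some.injEq] at hq
  subst hq
  split <;> simp [hc]

lemma chain'_of_forall {R : List Ltr → List Ltr → Prop} {L : List (List Ltr)}
    (h : ∀ a ∈ L, ∀ b ∈ L, R a b) : List.Chain' R L := by
  induction L with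
  | nil => exact List.isChain_nil
  | cons a L ih =>
    refine List.isChain_cons.2 ⟨fun y hy => ?_, ih fun x hx y hy => h x (by simp [hx]) y (by simp [hy])⟩
    exact h a (by simp) y (by simp [List.mem_of_mem_head? hy])

lemma chain'_W (n : ℕ) : List.Chain' P (W n) := by
  have hmem : ∀ l ∈ blocks n, ∃ a s c t k m, a ≠ 1 ∧ a = 0 ∧ c ≠ 1 ∧ c ≠ 0 ∧ a ≠ c ∧
      l = block a s c t k m := by
    intro l hl
    rw [blocks, List.mem_append] at hl
    rcases hl with hl | hl <;> rw [List.mem_map] at hl <;> obtain ⟨i, _, rfl⟩ := hl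
    · exact ⟨0, true, 2, false, _, _, by decide, rfl, by decide, by decide, by decide, rfl⟩
    · exact ⟨0, false, 2, true, _, _, by decide, rfl, by decide, by decide, by decide, rfl⟩
  have hnil : [] ∉ blocks n := by
    intro h
    obtain ⟨a, s, c, t, k, m, _, _, _, _, _, hb⟩ := hmem _ h
    simp [block] at hb
  rw [W]
  show List.IsChain P (blocks n).flatten
  rw [List.isChain_flatten hnil]
  constructor
  · intro l hl
    obtain ⟨a, s, c, t, k, m, ha, _, hc, _, hac, rfl⟩ := hmem _ hl
    exact chain'_block a s c t k m ha hac hc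
  · refine chain'_of_forall fun l₁ h₁ l₂ h₂ x hx y hy => ?_
    obtain ⟨a₁, s₁, c₁, t₁, k₁, m₁, _, _, _, hc₁, _, rfl⟩ := hmem _ h₁
    obtain ⟨a₂, s₂, c₂, t₂, k₂, m₂, _, ha₂, _, _, _, rfl⟩ := hmem _ h₂
    have hx' := getLast?_block _ _ _ _ _ _ hc₁ x hx
    rw [head?_block] at hy
    simp only [Option.mem_def, Option.some.injEq] at hy
    subst hy
    intro hxy
    exact (hx' (hxy.trans ha₂)).elim

end F3Aux

/-- Every word over `x, y, z, x⁻¹, y⁻¹, z⁻¹` whose product in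
the free group equals `wₙ` contains at least `2n²` (positive) occurrences of the
letter `y`. -/
theorem count_y_ge_of_eq_f3w (n : ℕ) (hn : 1 ≤ n) (l : List (Fin 3 × Bool))
    (hl : wordProd l = f3w n) :
    2 * n ^ 2 ≤ l.count ((1 : Fin 3), true) := by
  rw [F3Aux.wordProd_eq_mk, ← F3Aux.mk_W] at hl
  obtain ⟨r, hlr, hWr⟩ := (FreeGroup.Red.exact.1 hl : Relation.Join _ _ _)
  have hrW : r = F3Aux.W n := by
    rcases Relation.ReflTransGen.cases_head hWr with h | ⟨b, hstep, _⟩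
    · exact h.symm
    · exact absurd hstep (F3Aux.no_step_of_chain' (F3Aux.chain'_W n))
  have := F3Aux.red_count hlr ((1 : Fin 3), true)
  rw [hrW, F3Aux.count_W] at this
  exact this
end

section
/- Let F₂ be the free group on generators a, b, and let f : F₂ → ℤ² be the abelianization homomorphism. Then the fibre product P = {(u, v) ∈ F₂ × F₂ : f(u) = f(v)} is the subgroup of F₂ × F₂ generated by the three elements r = (a, a), s = (b, b), and t = (a·b·a⁻¹·b⁻¹, 1). -/
/-- The free group on two generators `a = 0`, `b = 1`. -/
abbrev F2 : Type := FreeGroup (Fin 2)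

/-- The abelianization homomorphism `F₂ → ℤ²` (written multiplicatively),
sending `a ↦ (1,0)` and `b ↦ (0,1)`. -/
def abMap : F2 →* Multiplicative (Fin 2 → ℤ) :=
  FreeGroup.lift fun i => Multiplicative.ofAdd (Pi.single i 1)

namespace FibreAux

/-- The commutator `aba⁻¹b⁻¹`. -/
abbrev c : F2 := FreeGroup.of 0 * FreeGroup.of 1 * (FreeGroup.of 0)⁻¹ * (FreeGroup.of 1)⁻¹

abbrev N : Subgroup F2 := Subgroup.normalClosure {c}

abbrev Q := F2 ⧸ N

abbrev qmk : F2 →* Q := QuotientGroup.mk' N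

lemma qmk_c : qmk c = 1 :=
  (QuotientGroup.eq_one_iff _).2 (Subgroup.subset_normalClosure rfl)

open commutatorElement in
lemma commQ : Commute (qmk (FreeGroup.of 0)) (qmk (FreeGroup.of 1)) := by
  have h2 : ⁅qmk (FreeGroup.of 0), qmk (FreeGroup.of 1)⁆ = 1 := by
    rw [commutatorElement_def]
    simpa [map_mul, map_inv] using qmk_c
  exact commutatorElement_eq_one_iff_commute.mp h2

noncomputable def ψ : Multiplicative (Fin 2 → ℤ) →* Q where
  toFun x := qmk (FreeGroup.of 0) ^ (Multiplicative.toAdd x 0) *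
      qmk (FreeGroup.of 1) ^ (Multiplicative.toAdd x 1)
  map_one' := by simp
  map_mul' x y := by
    have h := (commQ.zpow_zpow (Multiplicative.toAdd y 0) (Multiplicative.toAdd x 1)).symm.eq
    simp only [toAdd_mul, Pi.add_apply, zpow_add]
    calc qmk (FreeGroup.of 0) ^ Multiplicative.toAdd x 0 * qmk (FreeGroup.of 0) ^ Multiplicative.toAdd y 0 *
        (qmk (FreeGroup.of 1) ^ Multiplicative.toAdd x 1 * qmk (FreeGroup.of 1) ^ Multiplicative.toAdd y 1)
        = qmk (FreeGroup.of 0) ^ Multiplicative.toAdd x 0 *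
          (qmk (FreeGroup.of 0) ^ Multiplicative.toAdd y 0 * qmk (FreeGroup.of 1) ^ Multiplicative.toAdd x 1) *
          qmk (FreeGroup.of 1) ^ Multiplicative.toAdd y 1 := by group
      _ = qmk (FreeGroup.of 0) ^ Multiplicative.toAdd x 0 *
          (qmk (FreeGroup.of 1) ^ Multiplicative.toAdd x 1 * qmk (FreeGroup.of 0) ^ Multiplicative.toAdd y 0) *
          qmk (FreeGroup.of 1) ^ Multiplicative.toAdd y 1 := by rw [h]
      _ = _ := by group

lemma psi_comp : ψ.comp abMap = qmk := by
  apply FreeGroup.ext_hom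
  intro i
  fin_cases i <;>
    simp [ψ, abMap, Pi.single_eq_same, Pi.single_eq_of_ne]

lemma ker_le_N : abMap.ker ≤ N := by
  intro w hw
  have : qmk w = 1 := by
    rw [← psi_comp]
    simp [MonoidHom.comp_apply, MonoidHom.mem_ker.mp hw]
  exact (QuotientGroup.eq_one_iff _).mp this

end FibreAux

open FibreAux in
/-- The fibre product `{(u,v) ∈ F₂ × F₂ : f(u) = f(v)}` of the
abelianization map is generated by `r = (a,a)`, `s = (b,b)` and
`t = (aba⁻¹b⁻¹, 1)`. -/
theorem fibreProduct_eq_closure :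
    ∀ p : F2 × F2,
      p ∈ Subgroup.closure
          {(FreeGroup.of 0, FreeGroup.of 0), (FreeGroup.of 1, FreeGroup.of 1),
            (FreeGroup.of 0 * FreeGroup.of 1 * (FreeGroup.of 0)⁻¹ * (FreeGroup.of 1)⁻¹, 1)} ↔
      abMap p.1 = abMap p.2 := by
  set S : Set (F2 × F2) := {(FreeGroup.of 0, FreeGroup.of 0), (FreeGroup.of 1, FreeGroup.of 1),
            (FreeGroup.of 0 * FreeGroup.of 1 * (FreeGroup.of 0)⁻¹ * (FreeGroup.of 1)⁻¹, 1)} with hS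
  set H := Subgroup.closure S with hH
  -- the "equal images" subgroup
  set E : Subgroup (F2 × F2) :=
    ((abMap.comp (MonoidHom.fst F2 F2)) / (abMap.comp (MonoidHom.snd F2 F2))).ker with hE
  have hEmem : ∀ p : F2 × F2, p ∈ E ↔ abMap p.1 = abMap p.2 := by
    intro p
    rw [hE, MonoidHom.mem_ker, MonoidHom.div_apply, div_eq_one]
    rfl
  have comm1 : ∀ x y : Multiplicative (Fin 2 → ℤ), x * y * x⁻¹ * y⁻¹ = 1 := by
    intro x y; rw [mul_comm x y]; group
  have habc : abMap c = 1 := by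
    simp only [c, map_mul, map_inv, abMap, FreeGroup.lift_apply_of]
    apply comm1
  have hforward : H ≤ E := by
    rw [hH]
    apply Subgroup.closure_le E |>.2
    rw [hS]
    rintro p (rfl | rfl | rfl) <;> rw [SetLike.mem_coe, hEmem]
    show abMap c = abMap 1
    rw [habc, map_one]
  -- diagonal elements
  have hdiag : ∀ w : F2, (w, w) ∈ H := by
    intro w
    induction w using FreeGroup.induction_on with
    | C1 => exact one_mem H
    | of i =>
      fin_cases i
      · exact Subgroup.subset_closure (by rw [hS]; left; rfl)
      · exact Subgroup.subset_closure (by rw [hS]; right; left; rfl)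
    | inv_of x hx => exact inv_mem hx
    | mul x y hx hy => exact mul_mem hx hy
  -- K := {w | (w,1) ∈ H}, normal
  set K : Subgroup F2 := H.comap (MonoidHom.inl F2 F2) with hK
  have hKnormal : K.Normal := by
    constructor
    intro n hn g
    have hmem : (g, g) * (n, (1 : F2)) * (g, g)⁻¹ ∈ H :=
      mul_mem (mul_mem (hdiag g) hn) (inv_mem (hdiag g))
    have : ((g * n * g⁻¹ : F2), (1 : F2)) = (g, g) * (n, (1 : F2)) * (g, g)⁻¹ := by
      simp [Prod.ext_iff, mul_assoc]
    rw [hK, Subgroup.mem_comap]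
    show ((g * n * g⁻¹ : F2), (1 : F2)) ∈ H
    rw [this]; exact hmem
  have hcK : c ∈ K := by
    rw [hK, Subgroup.mem_comap]
    exact Subgroup.subset_closure (by rw [hS]; right; right; rfl)
  have hNK : N ≤ K := Subgroup.normalClosure_le_normal (by simpa using hcK)
  intro p
  constructor
  · intro hp; exact (hEmem p).mp (hforward hp)
  · intro hp
    obtain ⟨u, v⟩ := p
    have hker : u * v⁻¹ ∈ abMap.ker := by
      rw [MonoidHom.mem_ker, map_mul, map_inv, hp]
      group
    have h1 : ((u * v⁻¹ : F2), (1 : F2)) ∈ H := hNK (ker_le_N hker)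
    have : ((u, v) : F2 × F2) = ((u * v⁻¹ : F2), (1 : F2)) * (v, v) := by
      simp [Prod.ext_iff, mul_assoc]
    rw [this]
    exact mul_mem h1 (hdiag v)
end

section
/- Let CoG (the class of cographs) be the smallest class of finite simple graphs that contains the one-vertex graph K₁ and is closed under complementation and disjoint union. Then: (1) every connected cograph with more than one vertex is a join (its vertex set admits a partition into two nonempty sets with every vertex of one part adjacent to every vertex of the other); and (2) a finite simple graph is a cograph if and only if it has no induced subgraph isomorphic to P₄, the path graph on four vertices. -/
/-- A graph is a *join* if its vertex set splits into two nonempty parts with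
every vertex of one part adjacent to every vertex of the other. -/
def SimpleGraph.IsJoin {V : Type} (G : SimpleGraph V) : Prop :=
  ∃ J K : Set V, J.Nonempty ∧ K.Nonempty ∧ Disjoint J K ∧ J ∪ K = Set.univ ∧
    ∀ v ∈ J, ∀ w ∈ K, G.Adj v w

/-- The class of *cographs*: the smallest class of graphs containing the
one-vertex graph and closed (up to isomorphism) under complementation and
disjoint union. -/
inductive IsCograph : ∀ V : Type, SimpleGraph V → Prop
  | single : IsCograph PUnit ⊥
  | compl {V : Type} {G : SimpleGraph V} : IsCograph V G → IsCograph V Gᶜ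
  | disjUnion {V W : Type} {G : SimpleGraph V} {H : SimpleGraph W} :
      IsCograph V G → IsCograph W H → IsCograph (V ⊕ W) (G ⊕g H)
  | iso {V W : Type} {G : SimpleGraph V} {H : SimpleGraph W} :
      G ≃g H → IsCograph V G → IsCograph W H

/-- A graph has an induced `P₄` if four distinct vertices induce a subgraph
isomorphic to the path on four vertices. -/
def SimpleGraph.HasInducedP4 {V : Type} (G : SimpleGraph V) : Prop :=
  ∃ f : Fin 4 ↪ V, ∀ i j : Fin 4, (SimpleGraph.pathGraph 4).Adj i j ↔ G.Adj (f i) (f j)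

namespace CographAux

open SimpleGraph

lemma hasP4_of {V : Type} {G : SimpleGraph V} {w0 w1 w2 w3 : V}
    (h01 : G.Adj w0 w1) (h12 : G.Adj w1 w2) (h23 : G.Adj w2 w3)
    (h02 : ¬G.Adj w0 w2) (h03 : ¬G.Adj w0 w3) (h13 : ¬G.Adj w1 w3)
    (d02 : w0 ≠ w2) (d03 : w0 ≠ w3) (d13 : w1 ≠ w3) : G.HasInducedP4 := by
  have d01 := h01.ne
  have d12 := h12.ne
  have d23 := h23.ne
  have h10 : ¬G.Adj w2 w0 := fun h => h02 h.symm
  have h30 : ¬G.Adj w3 w0 := fun h => h03 h.symm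
  have h31 : ¬G.Adj w3 w1 := fun h => h13 h.symm
  refine ⟨⟨![w0, w1, w2, w3], ?_⟩, ?_⟩
  · intro i j hij
    fin_cases i <;> fin_cases j <;> simp_all <;> first
      | rfl
      | (exact absurd hij (by assumption))
      | (exact absurd hij.symm (by assumption))
  · intro i j
    change (pathGraph 4).Adj i j ↔ G.Adj (![w0, w1, w2, w3] i) (![w0, w1, w2, w3] j)
    fin_cases i <;> fin_cases j <;>
      simp [pathGraph_adj, h01, h12, h23, h01.symm, h12.symm, h23.symm,
        h02, h03, h13, h10, h30, h31] <;> decide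

lemma not_hasP4_induce {V : Type} {G : SimpleGraph V} (s : Set V)
    (h : ¬G.HasInducedP4) : ¬(G.induce s).HasInducedP4 := by
  rintro ⟨f, hf⟩
  exact h ⟨f.trans (Function.Embedding.subtype _), fun i j => hf i j⟩

lemma compl_induce {V : Type} (G : SimpleGraph V) (s : Set V) :
    (G.induce s)ᶜ = Gᶜ.induce s := by
  ext x y
  simp only [SimpleGraph.compl_adj, SimpleGraph.comap_adj, Function.Embedding.coe_subtype,
    ne_eq, Subtype.ext_iff]

lemma not_hasP4_compl {V : Type} {G : SimpleGraph V}
    (h : ¬G.HasInducedP4) : ¬Gᶜ.HasInducedP4 := by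
  rintro ⟨f, hf⟩
  have tinj : Function.Injective (![1, 3, 0, 2] : Fin 4 → Fin 4) := by decide
  refine h ⟨⟨fun i => f (![1, 3, 0, 2] i), fun i j hij => tinj (f.injective hij)⟩, ?_⟩
  intro i j
  show (pathGraph 4).Adj i j ↔ G.Adj (f (![1, 3, 0, 2] i)) (f (![1, 3, 0, 2] j))
  by_cases hij : i = j
  · subst hij
    simp [SimpleGraph.irrefl]
  · have hne : f (![1, 3, 0, 2] i) ≠ f (![1, 3, 0, 2] j) :=
      fun hh => hij (tinj (f.injective hh))
    have key : ∀ a b : Fin 4, a ≠ b →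
        ((pathGraph 4).Adj a b ↔ ¬(pathGraph 4).Adj (![1, 3, 0, 2] a) (![1, 3, 0, 2] b)) := by
      simp only [pathGraph_adj]
      decide
    rw [key i j hij, hf]
    simp only [SimpleGraph.compl_adj]
    tauto

lemma not_hasP4_sum {V W : Type} {G : SimpleGraph V} {H : SimpleGraph W}
    (hG : ¬G.HasInducedP4) (hH : ¬H.HasInducedP4) : ¬(G ⊕g H).HasInducedP4 := by
  rintro ⟨f, hf⟩
  have h01 : (G ⊕g H).Adj (f 0) (f 1) := (hf 0 1).mp (by rw [pathGraph_adj]; decide)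
  have h12 : (G ⊕g H).Adj (f 1) (f 2) := (hf 1 2).mp (by rw [pathGraph_adj]; decide)
  have h23 : (G ⊕g H).Adj (f 2) (f 3) := (hf 2 3).mp (by rw [pathGraph_adj]; decide)
  rcases e0 : f 0 with a0 | a0 <;> rcases e1 : f 1 with a1 | a1 <;>
    rcases e2 : f 2 with a2 | a2 <;> rcases e3 : f 3 with a3 | a3 <;>
    rw [e0, e1] at h01 <;> rw [e1, e2] at h12 <;> rw [e2, e3] at h23 <;>
    simp only [SimpleGraph.sum_adj] at h01 h12 h23
  · -- all inl
    have key : ∀ i, f i = Sum.inl (![a0, a1, a2, a3] i) := by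
      intro i; fin_cases i <;> simpa
    refine hG ⟨⟨fun i => ![a0, a1, a2, a3] i, fun i j hij => ?_⟩, fun i j => ?_⟩
    · exact f.injective (by rw [key, key]; exact congrArg _ hij)
    · rw [hf i j, key i, key j]
      simp [SimpleGraph.sum_adj]
      exact Iff.rfl
  · -- all inr
    have key : ∀ i, f i = Sum.inr (![a0, a1, a2, a3] i) := by
      intro i; fin_cases i <;> simpa
    refine hH ⟨⟨fun i => ![a0, a1, a2, a3] i, fun i j hij => ?_⟩, fun i j => ?_⟩
    · exact f.injective (by rw [key, key]; exact congrArg _ hij)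
    · rw [hf i j, key i, key j]
      simp [SimpleGraph.sum_adj]
      exact Iff.rfl

lemma exists_adj_of_reachable {V : Type} {G : SimpleGraph V} {a b : V}
    (h : G.Reachable a b) (hne : a ≠ b) : ∃ c, G.Adj a c := by
  refine h.elim fun p => ?_
  cases p with
  | nil => exact absurd rfl hne
  | cons h _ => exact ⟨_, h⟩

lemma neighbor_in_component {V : Type} (G : SimpleGraph V) (v : V) :
    ∀ (x : V) (p : G.Walk x v) (hx : x ∈ ({v}ᶜ : Set V)),
      ∃ (y : V) (hy : y ∈ ({v}ᶜ : Set V)), G.Adj v y ∧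
        (G.induce {v}ᶜ).Reachable ⟨y, hy⟩ ⟨x, hx⟩ := by
  suffices h : ∀ (x z : V) (p : G.Walk x z) (hx : x ∈ ({z}ᶜ : Set V)),
      ∃ (y : V) (hy : y ∈ ({z}ᶜ : Set V)), G.Adj z y ∧
        (G.induce {z}ᶜ).Reachable ⟨y, hy⟩ ⟨x, hx⟩ by
    intro x p hx
    exact h x v p hx
  intro x z p
  induction p with
  | nil =>
    intro hx
    simp at hx
  | @cons x c z h p ih =>
    intro hx
    by_cases hc : c = z
    · subst hc
      exact ⟨x, hx, h.symm, SimpleGraph.Reachable.refl _⟩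
    · have hc' : c ∈ ({z}ᶜ : Set V) := by simpa using hc
      obtain ⟨y, hy, hvy, hreach⟩ := ih hc'
      refine ⟨y, hy, hvy, hreach.trans ?_⟩
      exact SimpleGraph.Adj.reachable (by simpa using h.symm)

lemma transition_pair {V : Type} (G : SimpleGraph V) (v : V) {b : ({v}ᶜ : Set V)} :
    ∀ {y : ({v}ᶜ : Set V)} (p : (G.induce {v}ᶜ).Walk y b) (hy : G.Adj v y)
      (hb : ¬G.Adj v (b : V)),
      ∃ a b' : ({v}ᶜ : Set V), G.Adj v a ∧ ¬G.Adj v (b' : V) ∧ G.Adj (a : V) b' ∧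
        (G.induce {v}ᶜ).Reachable a b ∧ (G.induce {v}ᶜ).Reachable b' b := by
  suffices hsuf : ∀ (y c : ({v}ᶜ : Set V)) (p : (G.induce {v}ᶜ).Walk y c),
      G.Adj v y → ¬G.Adj v (c : V) →
      ∃ a b' : ({v}ᶜ : Set V), G.Adj v a ∧ ¬G.Adj v (b' : V) ∧ G.Adj (a : V) b' ∧
        (G.induce {v}ᶜ).Reachable a c ∧ (G.induce {v}ᶜ).Reachable b' c by
    intro y p hy hb
    exact hsuf y b p hy hb
  intro y c p
  induction p with
  | nil =>
    intro hy hb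
    exact absurd hy hb
  | @cons y z c h p ih =>
    intro hy hb
    by_cases hz : G.Adj v (z : V)
    · obtain ⟨a, b', h1, h2, h3, h4, h5⟩ := ih hz hb
      exact ⟨a, b', h1, h2, h3, h4, h5⟩
    · refine ⟨y, z, hy, hz, by simpa using h, (SimpleGraph.Walk.cons h p).reachable, p.reachable⟩

lemma all_adj {V : Type} {G : SimpleGraph V} (hP4 : ¬G.HasInducedP4) (v : V)
    (hpre : G.Preconnected) (hdisc : ¬(G.induce {v}ᶜ).Preconnected) :
    ∀ w, w ≠ v → G.Adj v w := by
  intro w hw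
  by_contra hvw
  have hwS : w ∈ ({v}ᶜ : Set V) := by simpa using hw
  set s : Set V := {v}ᶜ with hs
  set G' := G.induce s with hG'
  -- there is a vertex of s not reachable (in G') from bS := ⟨w, _⟩
  have hdisc' : ∃ a0 b0 : s, ¬G'.Reachable a0 b0 := by
    by_contra hcon
    push_neg at hcon
    exact hdisc fun a b => hcon a b
  obtain ⟨a0, b0, hab⟩ := hdisc'
  set bS : s := ⟨w, hwS⟩ with hbS
  have hx : ∃ x : s, ¬G'.Reachable x bS := by
    by_cases h : G'.Reachable a0 bS
    · exact ⟨b0, fun h' => hab (h.trans h'.symm)⟩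
    · exact ⟨a0, h⟩
  obtain ⟨x, hxb⟩ := hx
  -- a neighbor c of v in the component of x
  refine (hpre (x : V) v).elim fun px => ?_
  obtain ⟨c, hcS, hvc, hreach_cx⟩ := neighbor_in_component G v (x : V) px x.2
  have hcb : ¬G'.Reachable ⟨c, hcS⟩ bS := fun h => hxb ((hreach_cx.symm).trans h)
  -- a neighbor y of v in the component of w
  refine (hpre w v).elim fun pw => ?_
  obtain ⟨y, hyS, hvy, hreach_yw⟩ := neighbor_in_component G v w pw hwS
  -- walk from y to bS in G'
  refine hreach_yw.elim fun q => ?_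
  obtain ⟨a, b', hva, hvb', hab', hra, hrb'⟩ := transition_pair G v q hvy hvw
  -- c is not adjacent to a or b'
  have hca : ¬G.Adj c (a : V) := fun h =>
    hcb ((SimpleGraph.Adj.reachable (by simpa [hG'] using h : G'.Adj ⟨c, hcS⟩ a)).trans hra)
  have hcb' : ¬G.Adj c (b' : V) := fun h =>
    hcb ((SimpleGraph.Adj.reachable (by simpa [hG'] using h : G'.Adj ⟨c, hcS⟩ b')).trans hrb')
  have dca : c ≠ (a : V) := fun h => hcb (by
    rw [show (⟨c, hcS⟩ : s) = a from Subtype.ext h]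
    exact hra)
  have dcb' : c ≠ (b' : V) := fun h => hcb (by
    rw [show (⟨c, hcS⟩ : s) = b' from Subtype.ext h]
    exact hrb')
  have dvb' : v ≠ (b' : V) := fun h => by
    have := b'.2
    rw [← h] at this
    simp at this
  exact hP4 (hasP4_of hvc.symm hva hab' hca hcb' hvb' dca dcb' dvb')

lemma seinsche : ∀ (n : ℕ) (V : Type) [Fintype V] (G : SimpleGraph V),
    Fintype.card V = n → ¬G.HasInducedP4 → 2 ≤ Fintype.card V →
    ¬G.Connected ∨ ¬Gᶜ.Connected := by
  intro n
  induction n using Nat.strong_induction_on with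
  | _ n ih =>
  intro V _ G hn hP4 hcard
  by_contra hcon
  push_neg at hcon
  obtain ⟨hQ, hC⟩ := hcon
  classical
  by_cases h2 : Fintype.card V = 2
  · obtain ⟨v, w, hvw⟩ := Fintype.exists_pair_of_one_lt_card (α := V) (by omega)
    have huniq : ∀ z : V, z ≠ v → z = w := by
      intro z hz
      by_contra hzw
      have : 2 < Fintype.card V := Fintype.two_lt_card_iff.mpr ⟨v, w, z, hvw, hz.symm, fun h => hzw h.symm⟩
      omega
    obtain ⟨c, hc⟩ := exists_adj_of_reachable (hQ.preconnected v w) hvw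
    have hcv : c ≠ v := fun h => G.irrefl (h ▸ hc)
    have hadj : G.Adj v w := (huniq c hcv) ▸ hc
    obtain ⟨c', hc'⟩ := exists_adj_of_reachable (hC.preconnected v w) hvw
    have hcv' : c' ≠ v := fun h => Gᶜ.irrefl (h ▸ hc')
    have hadj' : Gᶜ.Adj v w := (huniq c' hcv') ▸ hc'
    exact ((SimpleGraph.compl_adj _ _ _).mp hadj').2 hadj
  · have h3 : 3 ≤ Fintype.card V := by omega
    obtain ⟨v⟩ : Nonempty V := Fintype.card_pos_iff.mp (by omega)
    set s : Set V := {v}ᶜ with hsdef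
    have hlt : Fintype.card s < Fintype.card V :=
      Fintype.card_lt_of_injective_of_notMem (b := v) Subtype.val Subtype.val_injective
        (by rintro ⟨⟨x, hx⟩, hx'⟩; rw [hsdef] at hx; simp at hx; exact hx hx')
    have hs2 : 2 ≤ Fintype.card s := by
      obtain ⟨a, b, c, hab, hac, hbc⟩ := (Fintype.two_lt_card_iff (α := V)).mp (by omega)
      have mem : ∀ x : V, x ≠ v → x ∈ s := by intro x hx; rw [hsdef]; simpa using hx
      have hex : ∃ x y : s, x ≠ y := by
        by_cases ha : a = v
        · exact ⟨⟨b, mem b fun h => hab (by rw [ha, h])⟩, ⟨c, mem c fun h => hac (by rw [ha, h])⟩,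
            fun h => hbc (congrArg Subtype.val h)⟩
        · by_cases hb : b = v
          · exact ⟨⟨a, mem a ha⟩, ⟨c, mem c fun h => hbc (by rw [hb, h])⟩,
              fun h => hac (congrArg Subtype.val h)⟩
          · exact ⟨⟨a, mem a ha⟩, ⟨b, mem b hb⟩, fun h => hab (congrArg Subtype.val h)⟩
      exact Fintype.one_lt_card_iff.mpr hex
    have hns : Nonempty s := Fintype.card_pos_iff.mp (by omega)
    have hnt : Nontrivial V := Fintype.one_lt_card_iff_nontrivial.mp (by omega)
    obtain ⟨w', hw'⟩ := exists_ne v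
    have hdich := ih (Fintype.card s) (by omega) s (G.induce s) rfl
      (not_hasP4_induce s hP4) (by omega)
    rcases hdich with hd | hd
    · have hpre : ¬(G.induce s).Preconnected := fun hp => hd ⟨hp⟩
      have hall := all_adj hP4 v hQ.preconnected hpre
      obtain ⟨c, hc⟩ := exists_adj_of_reachable (hC.preconnected v w') (fun h => hw' h.symm)
      have h' := (SimpleGraph.compl_adj _ _ _).mp hc
      exact h'.2 (hall c (fun h => h'.1 h.symm))
    · rw [compl_induce] at hd
      have hpre : ¬(Gᶜ.induce s).Preconnected := fun hp => hd ⟨hp⟩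
      have hall := all_adj (not_hasP4_compl hP4) v hC.preconnected hpre
      obtain ⟨c, hc⟩ := exists_adj_of_reachable (hQ.preconnected v w') (fun h => hw' h.symm)
      exact ((SimpleGraph.compl_adj _ _ _).mp (hall c hc.ne')).2 hc

lemma cograph_of_disconnected {V : Type} [Fintype V] (G : SimpleGraph V)
    (hdis : ¬G.Preconnected)
    (hcard : ∀ (W : Type) [Fintype W] [Nonempty W] (H : SimpleGraph W),
      Fintype.card W < Fintype.card V → ¬H.HasInducedP4 → IsCograph W H)
    (hP4 : ¬G.HasInducedP4) : IsCograph V G := by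
  classical
  rw [SimpleGraph.Preconnected] at hdis
  push_neg at hdis
  obtain ⟨a, b, hab⟩ := hdis
  set A : Set V := {x | G.Reachable a x} with hA
  have haA : a ∈ A := SimpleGraph.Reachable.refl a
  have hbB : b ∈ Aᶜ := hab
  have hcross : ∀ x ∈ A, ∀ y ∈ Aᶜ, ¬G.Adj x y := by
    intro x hx y hy hadj
    exact hy (Set.mem_setOf.mp hx |>.trans hadj.reachable)
  have hNA : Nonempty A := ⟨⟨a, haA⟩⟩
  have hNB : Nonempty ↥Aᶜ := ⟨⟨b, hbB⟩⟩
  have hltA : Fintype.card A < Fintype.card V :=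
    Fintype.card_lt_of_injective_of_notMem (b := b) Subtype.val Subtype.val_injective
      (by rintro ⟨y, hy⟩; exact hbB (hy ▸ y.2))
  have hltB : Fintype.card ↥Aᶜ < Fintype.card V :=
    Fintype.card_lt_of_injective_of_notMem (b := a) Subtype.val Subtype.val_injective
      (by rintro ⟨y, hy⟩; exact (hy ▸ y.2) haA)
  have cA : IsCograph A (G.induce A) :=
    hcard A (G.induce A) hltA (not_hasP4_induce A hP4)
  have cB : IsCograph ↥Aᶜ (G.induce Aᶜ) :=
    hcard ↥Aᶜ (G.induce Aᶜ) hltB (not_hasP4_induce Aᶜ hP4)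
  refine IsCograph.iso ⟨Equiv.Set.sumCompl A, ?_⟩ (IsCograph.disjUnion cA cB)
  intro u v
  match u, v with
  | Sum.inl x, Sum.inl y => simp [SimpleGraph.sum_adj]
  | Sum.inl x, Sum.inr y =>
    simp only [Equiv.Set.sumCompl_apply_inl, Equiv.Set.sumCompl_apply_inr,
      SimpleGraph.sum_adj]
    exact iff_of_false (hcross x x.2 y y.2) (by simp)
  | Sum.inr x, Sum.inl y =>
    simp only [Equiv.Set.sumCompl_apply_inl, Equiv.Set.sumCompl_apply_inr,
      SimpleGraph.sum_adj]
    exact iff_of_false (fun h => hcross y y.2 x x.2 h.symm) (by simp)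
  | Sum.inr x, Sum.inr y => simp [SimpleGraph.sum_adj]

lemma cograph_of_not_hasP4 : ∀ (n : ℕ) (V : Type) [Fintype V] [Nonempty V]
    (G : SimpleGraph V), Fintype.card V = n → ¬G.HasInducedP4 → IsCograph V G := by
  intro n
  induction n using Nat.strong_induction_on with
  | _ n ih =>
  intro V _ _ G hn hP4
  classical
  by_cases h1 : Fintype.card V = 1
  · have hsub : Subsingleton V := Fintype.card_le_one_iff_subsingleton.mp (by omega)
    have e : PUnit ≃ V := Fintype.equivOfCardEq (by simp [h1])
    refine IsCograph.iso ⟨e, fun {u v} => ?_⟩ IsCograph.single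
    simp only [SimpleGraph.bot_adj, iff_false]
    intro h
    exact h.ne (hsub.elim _ _)
  · have h2 : 2 ≤ Fintype.card V := by
      have := Fintype.card_pos_iff.mpr (inferInstance : Nonempty V)
      omega
    have hcard : ∀ (W : Type) [Fintype W] [Nonempty W] (H : SimpleGraph W),
        Fintype.card W < Fintype.card V → ¬H.HasInducedP4 → IsCograph W H := by
      intro W _ _ H hW hHP4
      exact ih (Fintype.card W) (by omega) W H rfl hHP4
    rcases seinsche n V G hn hP4 h2 with hd | hd
    · have hpre : ¬G.Preconnected := fun hp => hd ⟨hp⟩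
      exact cograph_of_disconnected G hpre hcard hP4
    · have hpre : ¬Gᶜ.Preconnected := fun hp => hd ⟨hp⟩
      have hc : IsCograph V Gᶜ :=
        cograph_of_disconnected Gᶜ hpre hcard (not_hasP4_compl hP4)
      have := hc.compl
      rwa [compl_compl] at this

lemma not_hasP4_of_cograph : ∀ {V : Type} {G : SimpleGraph V},
    IsCograph V G → ¬G.HasInducedP4 := by
  intro V G h
  induction h with
  | single =>
    rintro ⟨f, -⟩
    exact absurd (f.injective (Subsingleton.elim _ _ : f 0 = f 1)) (by decide)
  | compl _ ih => exact not_hasP4_compl ih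
  | disjUnion _ _ ih1 ih2 => exact not_hasP4_sum ih1 ih2
  | @iso V' W' G' H' e _ ih =>
    rintro ⟨f, hf⟩
    refine ih ⟨f.trans e.symm.toEmbedding.toEmbedding, fun i j => ?_⟩
    rw [hf i j]
    exact (e.symm.map_adj_iff).symm

end CographAux

/-- (1) Every connected cograph with more than one vertex is a
join; (2) a (nonempty) finite graph is a cograph if and only if it has no
induced `P₄`. -/
theorem cograph_join_and_P4_characterization :
    (∀ (V : Type) [Fintype V] (G : SimpleGraph V),
        IsCograph V G → G.Connected → 1 < Fintype.card V → G.IsJoin) ∧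
    (∀ (V : Type) [Fintype V] [Nonempty V] (G : SimpleGraph V),
        IsCograph V G ↔ ¬ G.HasInducedP4) := by
  classical
  constructor
  · intro V _ G hc hconn hcard
    have hP4 := CographAux.not_hasP4_of_cograph hc
    rcases CographAux.seinsche (Fintype.card V) V G rfl hP4 (by omega) with hd | hd
    · exact absurd hconn hd
    · have hne : Nonempty V := Fintype.card_pos_iff.mp (by omega)
      have hpre : ¬Gᶜ.Preconnected := fun hp => hd ⟨hp⟩
      rw [SimpleGraph.Preconnected] at hpre
      push_neg at hpre
      obtain ⟨a, b, hab⟩ := hpre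
      refine ⟨{x | Gᶜ.Reachable a x}, {x | Gᶜ.Reachable a x}ᶜ,
        ⟨a, SimpleGraph.Reachable.refl a⟩, ⟨b, hab⟩,
        disjoint_compl_right, Set.union_compl_self _, ?_⟩
      intro v hv w hw
      have hvw : v ≠ w := fun h => hw (h ▸ hv)
      by_contra hadj
      exact hw (Set.mem_setOf.mp hv |>.trans
        (SimpleGraph.Adj.reachable ((SimpleGraph.compl_adj G v w).mpr ⟨hvw, hadj⟩)))
  · intro V _ _ G
    constructor
    · exact CographAux.not_hasP4_of_cograph
    · intro h
      exact CographAux.cograph_of_not_hasP4 (Fintype.card V) V G rfl h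
end
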